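/- arXiv:2005.03630 — 11 statements merged into one kernel-verified Lean document; each statement's English description precedes it below -/
import Mathlib

section
/- Let μ be a finite measure on a measurable space (S, Σ) and let V ⊆ S be a set that is not measurable with respect to the completion of μ (equivalently, the inner measure of V is strictly smaller than its outer measure). Then there exist two measures μ₀ and μ₁ on Σ_V := σ(Σ ∪ {V}), both of which extend μ (i.e. μ₀ and μ₁ agree with μ on Σ), such that μ₀(V) ≠ μ₁(V). -/
open MeasureTheory

/-- **Measure extension along a nonmeasurable set.**
If `μ` is a finite measure on `(S, Σ)` and `V ⊆ S` is not measurable with respect to the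
completion of `μ` (i.e. `V` is not null-measurable), then there are two measures `μ₀`, `μ₁`
on `Σ_V := σ(Σ ∪ {V})`, both extending `μ` (they agree with `μ` on `Σ`), such that
`μ₀ V ≠ μ₁ V`. -/
theorem measure_extension_of_not_nullMeasurableSet
    {S : Type*} [m : MeasurableSpace S] (μ : Measure S) [IsFiniteMeasure μ]
    (V : Set S) (hV : ¬ NullMeasurableSet V μ) :
    ∃ μ₀ μ₁ : @Measure S (m ⊔ MeasurableSpace.generateFrom {V}),
      (∀ A : Set S, MeasurableSet[m] A → μ₀ A = μ A) ∧
      (∀ A : Set S, MeasurableSet[m] A → μ₁ A = μ A) ∧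
      μ₀ V ≠ μ₁ V := by
  classical
  set T := toMeasurable μ V with hTdef
  set W := toMeasurable μ Vᶜ with hWdef
  have hVT : V ⊆ T := subset_toMeasurable μ V
  have hVcW : Vᶜ ⊆ W := subset_toMeasurable μ Vᶜ
  have hWcV : Wᶜ ⊆ V := Set.compl_subset_comm.mp hVcW
  have hTm : MeasurableSet T := measurableSet_toMeasurable μ V
  have hWm : MeasurableSet W := measurableSet_toMeasurable μ Vᶜ
  set ν := μ.toOuterMeasure with hν
  have hνapp : ∀ t : Set S, ν t = μ t := fun t => rfl
  set ω₁ : OuterMeasure S :=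
    OuterMeasure.restrict V ν + OuterMeasure.restrict Tᶜ ν with hω₁
  set ω₀ : OuterMeasure S :=
    OuterMeasure.restrict Wᶜ ν + OuterMeasure.restrict Vᶜ ν with hω₀
  have hω₁app : ∀ t : Set S, ω₁ t = μ (t ∩ V) + μ (t ∩ Tᶜ) := by
    intro t
    simp [hω₁, OuterMeasure.restrict_apply, hνapp]
  have hω₀app : ∀ t : Set S, ω₀ t = μ (t ∩ Wᶜ) + μ (t ∩ Vᶜ) := by
    intro t
    simp [hω₀, OuterMeasure.restrict_apply, hνapp]
  -- a helper: measurable sets split μ on traces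
  have key : ∀ (B t A : Set S), MeasurableSet A →
      μ (t ∩ B) = μ ((t ∩ A) ∩ B) + μ ((t \ A) ∩ B) := by
    intro B t A hA
    have h := measure_inter_add_diff (μ := μ) (t ∩ B) hA
    have e1 : (t ∩ B) ∩ A = (t ∩ A) ∩ B := by ext x; simp; tauto
    have e2 : (t ∩ B) \ A = (t \ A) ∩ B := by ext x; simp [Set.mem_diff]; tauto
    rw [e1, e2] at h
    exact h.symm
  -- measurable sets are Caratheodory for ω₁ and ω₀
  have hmcara₁ : m ≤ ω₁.caratheodory := by
    intro A hA
    rw [OuterMeasure.isCaratheodory_iff]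
    intro t
    rw [hω₁app, hω₁app, hω₁app]
    rw [key V t A hA, key Tᶜ t A hA]
    ring
  have hmcara₀ : m ≤ ω₀.caratheodory := by
    intro A hA
    rw [OuterMeasure.isCaratheodory_iff]
    intro t
    rw [hω₀app, hω₀app, hω₀app]
    rw [key Wᶜ t A hA, key Vᶜ t A hA]
    ring
  -- V is Caratheodory for ω₁
  have hVcara₁ : MeasurableSet[ω₁.caratheodory] V := by
    rw [OuterMeasure.isCaratheodory_iff]
    intro t
    rw [hω₁app, hω₁app, hω₁app]
    have e1 : (t ∩ V) ∩ V = t ∩ V := by rw [Set.inter_assoc, Set.inter_self]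
    have e2 : (t ∩ V) ∩ Tᶜ = ∅ := by
      ext x; simp only [Set.mem_inter_iff, Set.mem_compl_iff, Set.mem_empty_iff_false, iff_false]
      rintro ⟨⟨-, hx⟩, hx'⟩; exact hx' (hVT hx)
    have e3 : (t \ V) ∩ V = ∅ := Set.diff_inter_self
    have e4 : (t \ V) ∩ Tᶜ = t ∩ Tᶜ := by
      ext x
      simp only [Set.mem_inter_iff, Set.mem_diff, Set.mem_compl_iff]
      constructor
      · rintro ⟨⟨h1, -⟩, h2⟩; exact ⟨h1, h2⟩
      · rintro ⟨h1, h2⟩; exact ⟨⟨h1, fun hv => h2 (hVT hv)⟩, h2⟩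
    rw [e1, e2, e3, e4]
    simp
  -- V is Caratheodory for ω₀
  have hVcara₀ : MeasurableSet[ω₀.caratheodory] V := by
    rw [OuterMeasure.isCaratheodory_iff]
    intro t
    rw [hω₀app, hω₀app, hω₀app]
    have e1 : (t ∩ V) ∩ Wᶜ = t ∩ Wᶜ := by
      ext x
      simp only [Set.mem_inter_iff, Set.mem_compl_iff]
      constructor
      · rintro ⟨⟨h1, -⟩, h2⟩; exact ⟨h1, h2⟩
      · rintro ⟨h1, h2⟩; exact ⟨⟨h1, hWcV h2⟩, h2⟩
    have e2 : (t ∩ V) ∩ Vᶜ = ∅ := by rw [Set.inter_assoc, Set.inter_compl_self, Set.inter_empty]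
    have e3 : (t \ V) ∩ Wᶜ = ∅ := by
      ext x
      simp only [Set.mem_inter_iff, Set.mem_diff, Set.mem_compl_iff, Set.mem_empty_iff_false,
        iff_false]
      rintro ⟨⟨-, h1⟩, h2⟩; exact h1 (hWcV h2)
    have e4 : (t \ V) ∩ Vᶜ = t ∩ Vᶜ := by rw [Set.diff_eq, Set.inter_assoc, Set.inter_self]
    rw [e1, e2, e3, e4]
    simp
  have hm'V : MeasurableSet[m ⊔ MeasurableSpace.generateFrom {V}] V := by
    have hle : MeasurableSpace.generateFrom {V} ≤ m ⊔ MeasurableSpace.generateFrom {V} :=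
      le_sup_right
    exact hle _ (MeasurableSpace.measurableSet_generateFrom rfl)
  have hcara₁ : m ⊔ MeasurableSpace.generateFrom {V} ≤ ω₁.caratheodory := by
    refine sup_le hmcara₁ (MeasurableSpace.generateFrom_le ?_)
    rintro s rfl
    exact hVcara₁
  have hcara₀ : m ⊔ MeasurableSpace.generateFrom {V} ≤ ω₀.caratheodory := by
    refine sup_le hmcara₀ (MeasurableSpace.generateFrom_le ?_)
    rintro s rfl
    exact hVcara₀
  refine ⟨@OuterMeasure.toMeasure S (m ⊔ MeasurableSpace.generateFrom {V}) ω₀ hcara₀, @OuterMeasure.toMeasure S (m ⊔ MeasurableSpace.generateFrom {V}) ω₁ hcara₁,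
    ?_, ?_, ?_⟩
  · intro A hA
    have hA' : MeasurableSet[m ⊔ MeasurableSpace.generateFrom {V}] A := le_sup_left (α := MeasurableSpace S) _ hA
    rw [@toMeasure_apply S (m ⊔ MeasurableSpace.generateFrom {V}) ω₀ hcara₀ A hA', hω₀app]
    have h1 : μ (A ∩ Vᶜ) = μ (A ∩ W) := by
      have := Measure.measure_toMeasurable_inter (μ := μ) hA (measure_ne_top μ Vᶜ)
      rw [Set.inter_comm A W, Set.inter_comm A Vᶜ]
      exact this.symm ▸ this.symm
    rw [h1]
    have e : A ∩ W = A \ Wᶜ := by rw [Set.diff_compl]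
    rw [e]
    exact measure_inter_add_diff A hWm.compl
  · intro A hA
    have hA' : MeasurableSet[m ⊔ MeasurableSpace.generateFrom {V}] A := le_sup_left (α := MeasurableSpace S) _ hA
    rw [@toMeasure_apply S (m ⊔ MeasurableSpace.generateFrom {V}) ω₁ hcara₁ A hA', hω₁app]
    have h1 : μ (A ∩ V) = μ (A ∩ T) := by
      have := Measure.measure_toMeasurable_inter (μ := μ) hA (measure_ne_top μ V)
      rw [Set.inter_comm A T, Set.inter_comm A V]
      exact this.symm
    rw [h1]
    have e : A ∩ Tᶜ = A \ T := (Set.diff_eq A T).symm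
    rw [e]
    exact measure_inter_add_diff A hTm
  · rw [@toMeasure_apply S (m ⊔ MeasurableSpace.generateFrom {V}) ω₀ hcara₀ V hm'V,
      @toMeasure_apply S (m ⊔ MeasurableSpace.generateFrom {V}) ω₁ hcara₁ V hm'V,
      hω₀app, hω₁app]
    have e1 : V ∩ Wᶜ = Wᶜ := Set.inter_eq_right.mpr hWcV
    have e2 : V ∩ Vᶜ = ∅ := by simp
    have e3 : V ∩ V = V := Set.inter_self V
    have e4 : V ∩ Tᶜ = ∅ := by
      ext x; simp only [Set.mem_inter_iff, Set.mem_compl_iff, Set.mem_empty_iff_false, iff_false]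
      rintro ⟨h1, h2⟩; exact h2 (hVT h1)
    rw [e1, e2, e3, e4]
    simp only [measure_empty, add_zero]
    intro heq
    -- heq : μ Wᶜ = μ V; derive that V is null measurable
    apply hV
    have hμT : μ T = μ V := measure_toMeasurable V
    have hWcT : Wᶜ ⊆ T := hWcV.trans hVT
    have hdiff : μ (T \ Wᶜ) = 0 := by
      rw [measure_diff hWcT hWm.compl.nullMeasurableSet (measure_ne_top μ Wᶜ), hμT, ← heq,
        tsub_self]
    have hVW : (Wᶜ : Set S) =ᵐ[μ] V := by
      rw [ae_eq_set]
      constructor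
      · simp [Set.diff_eq_empty.mpr hWcV]
      · exact measure_mono_null (Set.diff_subset_diff_left hVT) hdiff
    exact (hWm.compl.nullMeasurableSet).congr hVW
end

section
/- Let (S, Σ, {τ_a : a ∈ L}) be an LMP and R a symmetric binary relation on S. Then R is a state bisimulation if and only if (S, Σ(R), {τ_a : a ∈ L}) is again an LMP, i.e. if and only if for every a ∈ L and every R-closed E ∈ Σ the function s ↦ τ_a(s, E) is Σ(R)-measurable. -/
open MeasureTheory

/-- A labelled Markov process over the measurable space `S` with label set `L`:
each `τ a` is a Markov kernel, i.e. `τ a s` is a subprobability measure for each state `s`,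
and `s ↦ τ a s E` is measurable for each measurable `E`. -/
structure LMP (S : Type*) (L : Type*) [MeasurableSpace S] where
  τ : L → S → Measure S
  prob_le_one : ∀ (a : L) (s : S), τ a s Set.univ ≤ 1
  measurable_eval : ∀ (a : L) (E : Set S), MeasurableSet E → Measurable fun s => τ a s E

namespace LMP

variable {S L : Type*} [MeasurableSpace S]

/-- `A` is `R`-closed: anything related to a point of `A` lies in `A`. -/
def RClosed (R : Set (S × S)) (A : Set S) : Prop :=
  ∀ ⦃x⦄, x ∈ A → ∀ ⦃s⦄, (x, s) ∈ R → s ∈ A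

/-- `Σ(R)`: the family of measurable `R`-closed sets. -/
def sigmaCl (R : Set (S × S)) : Set (Set S) :=
  {A | MeasurableSet A ∧ RClosed R A}

/-- `R(Λ)`: the relation identifying states belonging to exactly the same members of `Λ`. -/
def rel (Λ : Set (Set S)) : Set (S × S) :=
  {p | ∀ A ∈ Λ, p.1 ∈ A ↔ p.2 ∈ A}

/-- `R^T(Λ)`: states assigning the same probabilities to every member of `Λ`, for all labels. -/
def relT (M : LMP S L) (Λ : Set (Set S)) : Set (S × S) :=
  {p | ∀ (a : L), ∀ E ∈ Λ, M.τ a p.1 E = M.τ a p.2 E}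

/-- The operator `𝒪`. -/
def Oop (M : LMP S L) (R : Set (S × S)) : Set (S × S) :=
  M.relT (sigmaCl R)

/-- The operator `𝒢`. -/
def Gop (M : LMP S L) (Λ : Set (Set S)) : Set (Set S) :=
  sigmaCl (M.relT Λ)

/-- The members of the σ-algebra generated by a family of sets. -/
def sigmaGen (U : Set (Set S)) : Set (Set S) :=
  {A | MeasurableSet[MeasurableSpace.generateFrom U] A}

/-- Transfinite iterates of `𝒪`. -/
noncomputable def Oiter (M : LMP S L) (R : Set (S × S)) (α : Ordinal) : Set (S × S) :=
  Ordinal.limitRecOn α R (fun _ prev => M.Oop prev)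
    (fun o _ ih => ⋂ (o' : Ordinal) (h : o' < o), ih o' h)

/-- Transfinite iterates of `𝒢`. -/
noncomputable def Giter (M : LMP S L) (Λ : Set (Set S)) (α : Ordinal) : Set (Set S) :=
  Ordinal.limitRecOn α Λ (fun _ prev => M.Gop prev)
    (fun o _ ih => sigmaGen (⋃ (o' : Ordinal) (h : o' < o), ih o' h))

/-- `Λ` is a sub-σ-algebra of the ambient σ-algebra. -/
structure IsSubSigmaAlgebra (Λ : Set (Set S)) : Prop where
  subset_meas : ∀ A ∈ Λ, MeasurableSet A
  empty_mem : (∅ : Set S) ∈ Λ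
  compl_mem : ∀ A ∈ Λ, Aᶜ ∈ Λ
  iUnion_mem : ∀ f : ℕ → Set S, (∀ n, f n ∈ Λ) → (⋃ n, f n) ∈ Λ

/-- A family `Λ` is stable w.r.t. the process. -/
def Stable (M : LMP S L) (Λ : Set (Set S)) : Prop :=
  ∀ A ∈ Λ, ∀ q : ℚ, 0 ≤ q → q ≤ 1 → ∀ a : L,
    {s : S | ENNReal.ofReal (q : ℝ) < M.τ a s A} ∈ Λ

/-- A state bisimulation: a symmetric relation such that related states agree on
all measurable `R`-closed sets. -/
def IsStateBisim (M : LMP S L) (R : Set (S × S)) : Prop :=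
  (∀ p ∈ R, (p.2, p.1) ∈ R) ∧
    ∀ p ∈ R, ∀ (a : L), ∀ C ∈ sigmaCl R, M.τ a p.1 C = M.τ a p.2 C

/-- State bisimilarity. -/
def stateBisim (M : LMP S L) : Set (S × S) :=
  {p | ∃ R, M.IsStateBisim R ∧ p ∈ R}

/-- Event bisimilarity: related by `R(Λ)` for some stable sub-σ-algebra `Λ`. -/
def eventBisim (M : LMP S L) : Set (S × S) :=
  {p | ∃ Λ : Set (Set S), IsSubSigmaAlgebra Λ ∧ M.Stable Λ ∧ p ∈ rel Λ}

/-- Formulas of the modal logic `𝓛`. -/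
inductive LForm (L : Type*) : Type _
  | top : LForm L
  | and : LForm L → LForm L → LForm L
  | dia : L → {q : ℚ // 0 ≤ q ∧ q < 1} → LForm L → LForm L

/-- Semantics of the logic `𝓛`. -/
def sem (M : LMP S L) : LForm L → Set S
  | LForm.top => Set.univ
  | LForm.and φ ψ => M.sem φ ∩ M.sem ψ
  | LForm.dia a q φ => {s | ENNReal.ofReal ((q : ℚ) : ℝ) < M.τ a s (M.sem φ)}

/-- `σ(⟦𝓛⟧)`: the σ-algebra generated by the sets definable in the logic. -/
def sigmaLogic (M : LMP S L) : Set (Set S) :=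
  sigmaGen (Set.range M.sem)

end LMP

open LMP in
/-- A symmetric relation `R` on an LMP is a state bisimulation iff `(S, Σ(R), τ)` is again
an LMP, i.e. iff for every label `a` and every `R`-closed measurable `E`, the map
`s ↦ τ_a(s, E)` is measurable with respect to the σ-algebra `Σ(R)` of measurable
`R`-closed sets. -/
theorem isStateBisim_iff_measurable_on_sigmaCl
    {S L : Type*} [MeasurableSpace S] [Countable L]
    (M : LMP S L) (R : Set (S × S)) (hsym : ∀ p ∈ R, (p.2, p.1) ∈ R) :
    M.IsStateBisim R ↔
      ∀ (a : L), ∀ E ∈ sigmaCl R,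
        Measurable[MeasurableSpace.generateFrom (sigmaCl R)] fun s => M.τ a s E := by
  constructor
  · rintro ⟨-, hbis⟩ a E hE
    intro B hB
    have hclosed : RClosed R ((fun s => M.τ a s E) ⁻¹' B) := by
      intro x hx s hxs
      have : M.τ a x E = M.τ a s E := hbis (x, s) hxs a E hE
      simpa [Set.mem_preimage, ← this] using hx
    exact MeasurableSpace.measurableSet_generateFrom
      ⟨M.measurable_eval a E hE.1 hB, hclosed⟩
  · intro hmeas
    refine ⟨hsym, ?_⟩
    rintro ⟨s, t⟩ hst a C hC
    -- every set measurable in the generated σ-algebra is R-closed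
    have key : ∀ A : Set S, MeasurableSet[MeasurableSpace.generateFrom (sigmaCl R)] A →
        RClosed R A := by
      intro A hA
      induction hA with
      | basic u hu => exact hu.2
      | empty => intro x hx; exact absurd hx (Set.notMem_empty x)
      | compl u _ ih =>
        intro x hx s hxs hs
        exact hx (ih hs (hsym _ hxs))
      | iUnion f _ ih =>
        intro x hx s hxs
        obtain ⟨i, hi⟩ := Set.mem_iUnion.mp hx
        exact Set.mem_iUnion.mpr ⟨i, ih i hi hxs⟩
    have hpre := hmeas a C hC (measurableSet_singleton (M.τ a s C))
    have hcl := key _ hpre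
    have hmem : s ∈ (fun u => M.τ a u C) ⁻¹' {M.τ a s C} := rfl
    have := hcl hmem hst
    exact (Set.mem_singleton_iff.mp this).symm
end

section
/- For any LMP (S, Σ, {τ_a : a ∈ L}), the relations R^T(σ(⟦𝓛⟧)) and R(σ(⟦𝓛⟧)) coincide: two states assign equal τ_a-probability to every set in σ(⟦𝓛⟧) for every label a if and only if they belong to exactly the same sets of σ(⟦𝓛⟧). -/
open MeasureTheory

section Aux
open LMP

variable {S L : Type*} [MeasurableSpace S]

lemma sem_measurableSet (M : LMP S L) (φ : LForm L) : MeasurableSet (M.sem φ) := by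
  induction φ with
  | top => exact MeasurableSet.univ
  | and φ ψ ihφ ihψ => exact ihφ.inter ihψ
  | dia a q φ ih =>
      have : M.sem (LForm.dia a q φ)
          = (fun s => M.τ a s (M.sem φ)) ⁻¹' Set.Ioi (ENNReal.ofReal ((q : ℚ) : ℝ)) := rfl
      rw [this]
      exact (M.measurable_eval a _ ih) measurableSet_Ioi

lemma sigmaLogic_measurableSet (M : LMP S L) {E : Set S} (hE : E ∈ M.sigmaLogic) :
    MeasurableSet E := by
  have h := MeasurableSpace.generateFrom_le (s := Set.range M.sem)
    (fun t ht => by rcases ht with ⟨φ, rfl⟩; exact sem_measurableSet M φ)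
  exact h E hE

lemma sem_mem_sigmaLogic (M : LMP S L) (φ : LForm L) : M.sem φ ∈ M.sigmaLogic :=
  MeasurableSpace.measurableSet_generateFrom ⟨φ, rfl⟩

lemma isPiSystem_range_sem (M : LMP S L) : IsPiSystem (Set.range M.sem) := by
  rintro _ ⟨φ, rfl⟩ _ ⟨ψ, rfl⟩ -
  exact ⟨LForm.and φ ψ, rfl⟩

/-- Related states agree on τ-values of formula sets. -/
lemma rel_tau_sem (M : LMP S L) {s t : S} (h : (s, t) ∈ rel M.sigmaLogic)
    (a : L) (φ : LForm L) : M.τ a s (M.sem φ) = M.τ a t (M.sem φ) := by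
  by_contra hne
  -- WLOG one is bigger
  wlog hlt : M.τ a t (M.sem φ) < M.τ a s (M.sem φ) generalizing s t
  · exact this (fun A hA => (h A hA).symm) (Ne.symm hne)
      (lt_of_le_of_ne (not_lt.mp hlt) hne)
  obtain ⟨q, hq0, hq1, hq2⟩ := ENNReal.lt_iff_exists_rat_btwn.mp hlt
  have hle1 : M.τ a s (M.sem φ) ≤ 1 := by
    calc M.τ a s (M.sem φ) ≤ M.τ a s Set.univ := measure_mono (Set.subset_univ _)
    _ ≤ 1 := M.prob_le_one a s
  have hqofReal : (Real.toNNReal (q : ℝ) : ENNReal) = ENNReal.ofReal ((q : ℚ) : ℝ) := rfl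
  have hqlt1 : q < 1 := by
    have : ENNReal.ofReal ((q : ℚ) : ℝ) < 1 := lt_of_lt_of_le (hqofReal ▸ hq2) hle1
    have h1 : ENNReal.ofReal ((q : ℚ) : ℝ) < ENNReal.ofReal 1 := by
      simpa using this
    have := (ENNReal.ofReal_lt_ofReal_iff (by norm_num)).mp h1
    exact_mod_cast this
  set ψ := LForm.dia a ⟨q, hq0, hqlt1⟩ φ with hψ
  have hmem := h (M.sem ψ) (sem_mem_sigmaLogic M ψ)
  have hs : s ∈ M.sem ψ := by
    simpa [hψ, sem, ← hqofReal] using hq2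
  have ht : t ∉ M.sem ψ := by
    simp only [hψ, sem, Set.mem_setOf_eq, not_lt, ← hqofReal]
    exact le_of_lt hq1
  exact ht (hmem.mp hs)

lemma rel_tau_eq (M : LMP S L) {s t : S} (h : (s, t) ∈ rel M.sigmaLogic)
    (a : L) {E : Set S} (hE : E ∈ M.sigmaLogic) : M.τ a s E = M.τ a t E := by
  have huniv : M.τ a s (Set.univ : Set S) = M.τ a t Set.univ :=
    rel_tau_sem M h a LForm.top
  refine @MeasurableSpace.induction_on_inter S (MeasurableSpace.generateFrom (Set.range M.sem))
    (fun E _ => M.τ a s E = M.τ a t E) (Set.range M.sem) rfl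
    (isPiSystem_range_sem M) (by simp) ?_ ?_ ?_ E hE
  · rintro _ ⟨φ, rfl⟩; exact rel_tau_sem M h a φ
  · intro A hA hAeq
    have hAm : MeasurableSet A := sigmaLogic_measurableSet M hA
    have hfinA : M.τ a s A ≠ ⊤ :=
      (lt_of_le_of_lt (le_trans (measure_mono (Set.subset_univ _))
        (M.prob_le_one a s)) ENNReal.one_lt_top).ne
    have hfinA' : M.τ a t A ≠ ⊤ :=
      (lt_of_le_of_lt (le_trans (measure_mono (Set.subset_univ _))
        (M.prob_le_one a t)) ENNReal.one_lt_top).ne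
    rw [measure_compl hAm hfinA, measure_compl hAm hfinA', huniv, hAeq]
  · intro f hdisj hmeas heq
    have hm : ∀ i, MeasurableSet (f i) := fun i =>
      sigmaLogic_measurableSet M (hmeas i)
    rw [measure_iUnion hdisj hm, measure_iUnion hdisj hm]
    exact tsum_congr heq

end Aux

open LMP in
/-- For any LMP, `R^T(σ(⟦𝓛⟧)) = R(σ(⟦𝓛⟧))`: two states assign the same `τ_a`-probability to
every set of σ(⟦𝓛⟧) for every label iff they belong to exactly the same sets of σ(⟦𝓛⟧). -/
theorem relT_sigmaLogic_eq_rel_sigmaLogic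
    {S L : Type*} [MeasurableSpace S] [Countable L] (M : LMP S L) :
    M.relT M.sigmaLogic = rel M.sigmaLogic := by
  ext ⟨s, t⟩
  constructor
  · intro h
    intro A hA
    have hsem : ∀ φ : LForm L, s ∈ M.sem φ ↔ t ∈ M.sem φ := by
      intro φ
      induction φ with
      | top => simp [sem]
      | and φ ψ ihφ ihψ => simp [sem, ihφ, ihψ]
      | dia a q φ ih =>
          have := h a (M.sem φ) (sem_mem_sigmaLogic M φ)
          simp [sem, this]
    refine MeasurableSpace.generateFrom_induction (Set.range M.sem)
      (fun A _ => (s ∈ A ↔ t ∈ A)) ?_ (by simp) ?_ ?_ A hA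
    · rintro _ ⟨φ, rfl⟩ _; exact hsem φ
    · intro u _ hu; exact hu.not
    · intro f _ hf; simp only [Set.mem_iUnion]; exact exists_congr hf
  · intro h a E hE
    exact rel_tau_eq M h a hE
end

section
/- For any LMP (S, Σ, {τ_a : a ∈ L}): σ(⟦𝓛⟧) ⊆ G(σ(⟦𝓛⟧)), and the relation ∼e := R(σ(⟦𝓛⟧)) satisfies O(∼e) ⊆ ∼e; that is, σ(⟦𝓛⟧) is a post-fixpoint of G and event bisimilarity is a pre-fixpoint of O. -/
open MeasureTheory

open LMP in
lemma LMP.measurable_sem {S L : Type*} [MeasurableSpace S] (M : LMP S L) :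
    ∀ φ : LForm L, MeasurableSet (M.sem φ) := by
  intro φ
  induction φ with
  | top => exact MeasurableSet.univ
  | and φ ψ ihφ ihψ => exact ihφ.inter ihψ
  | dia a q φ ih =>
      exact measurableSet_lt measurable_const (M.measurable_eval a _ ih)

open LMP in
lemma LMP.mem_sigmaLogic_of_sem {S L : Type*} [MeasurableSpace S] (M : LMP S L)
    (φ : LForm L) : M.sem φ ∈ M.sigmaLogic :=
  MeasurableSpace.measurableSet_generateFrom ⟨φ, rfl⟩

open LMP in
/-- If two states agree on all sets of `U` they agree on the generated σ-algebra. -/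
lemma LMP.rel_sigmaGen {S : Type*} [MeasurableSpace S] {U : Set (Set S)} {x s : S}
    (h : ∀ A ∈ U, x ∈ A ↔ s ∈ A) : ∀ A ∈ sigmaGen U, x ∈ A ↔ s ∈ A := by
  intro A hA
  induction hA with
  | basic A hA => exact h A hA
  | empty => simp
  | compl A _ ih => simp [ih]
  | iUnion f _ ih => simp only [Set.mem_iUnion]; exact exists_congr ih

open LMP in
/-- σ-algebra membership of sigmaLogic sets. -/
lemma LMP.measurable_of_sigmaLogic {S L : Type*} [MeasurableSpace S] (M : LMP S L) :
    ∀ A ∈ M.sigmaLogic, MeasurableSet A := by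
  intro A hA
  have : MeasurableSpace.generateFrom (Set.range M.sem) ≤ ‹MeasurableSpace S› := by
    refine MeasurableSpace.generateFrom_le ?_
    rintro _ ⟨φ, rfl⟩
    exact M.measurable_sem φ
  exact this _ hA

open LMP in
/-- `σ(⟦𝓛⟧)` is a post-fixpoint of `𝒢`, and event bisimilarity `∼e = R(σ(⟦𝓛⟧))` is a
pre-fixpoint of `𝒪`. -/
theorem sigmaLogic_postfixpoint_and_eventBisim_prefixpoint
    {S L : Type*} [MeasurableSpace S] [Countable L] (M : LMP S L) :
    M.sigmaLogic ⊆ M.Gop M.sigmaLogic ∧ M.Oop (rel M.sigmaLogic) ⊆ rel M.sigmaLogic := by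
  -- relT sigmaLogic ⊆ rel sigmaLogic
  have hT : M.relT M.sigmaLogic ⊆ rel M.sigmaLogic := by
    rintro ⟨x, s⟩ hxs
    have hsem : ∀ φ : LForm L, x ∈ M.sem φ ↔ s ∈ M.sem φ := by
      intro φ
      induction φ with
      | top => simp [sem]
      | and φ ψ ihφ ihψ =>
          simp only [sem, Set.mem_inter_iff, ihφ, ihψ]
      | dia a q φ ih =>
          simp only [sem, Set.mem_setOf_eq]
          rw [hxs a (M.sem φ) (M.mem_sigmaLogic_of_sem φ)]
    intro A hA
    refine rel_sigmaGen (fun B hB => ?_) A hA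
    obtain ⟨φ, hφ⟩ := hB
    exact hφ ▸ hsem φ
  constructor
  · intro A hA
    refine ⟨M.measurable_of_sigmaLogic A hA, ?_⟩
    intro x hx s hR
    exact (hT hR A hA).mp hx
  · rintro ⟨x, s⟩ hxs
    have hsem : ∀ φ : LForm L, x ∈ M.sem φ ↔ s ∈ M.sem φ := by
      intro φ
      induction φ with
      | top => simp [sem]
      | and φ ψ ihφ ihψ =>
          simp only [sem, Set.mem_inter_iff, ihφ, ihψ]
      | dia a q φ ih =>
          simp only [sem, Set.mem_setOf_eq]
          have hcl : M.sem φ ∈ sigmaCl (rel (S := S) M.sigmaLogic) := by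
            refine ⟨M.measurable_sem φ, ?_⟩
            intro x' hx' s' hR
            exact (hR (M.sem φ) (M.mem_sigmaLogic_of_sem φ)).mp hx'
          rw [hxs a (M.sem φ) hcl]
    intro A hA
    refine rel_sigmaGen (fun B hB => ?_) A hA
    obtain ⟨φ, hφ⟩ := hB
    exact hφ ▸ hsem φ
end

section
/- Let (S, Σ, {τ_a : a ∈ L}) be an LMP and Σ₀ ⊆ Σ a sub-σ-algebra such that R(Σ₀) = R^T(Σ₀); set Σ_α := G^α(Σ₀). Then for every ordinal α, Σ_α ⊆ Σ_{α+1}; hence the transfinite sequence (Σ_α) is increasing. -/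
open MeasureTheory

open LMP in
private lemma LMP.relT_symm' {S L : Type*} [MeasurableSpace S] (M : LMP S L)
    (Λ : Set (Set S)) {p : S × S} (hp : p ∈ M.relT Λ) : (p.2, p.1) ∈ M.relT Λ :=
  fun a E hE => (hp a E hE).symm

open LMP in
private lemma LMP.sigmaGen_subset_sigmaCl' {S L : Type*} [MeasurableSpace S] (M : LMP S L)
    (Λ : Set (Set S)) {U : Set (Set S)}
    (hU : U ⊆ sigmaCl (M.relT Λ)) : sigmaGen U ⊆ sigmaCl (M.relT Λ) := by
  intro A hA
  have hA' : MeasurableSet[MeasurableSpace.generateFrom U] A := hA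
  clear hA
  induction hA' with
  | basic B hB => exact hU hB
  | empty => exact ⟨MeasurableSet.empty, fun x hx => absurd hx (Set.notMem_empty x)⟩
  | compl B _ ih =>
      refine ⟨ih.1.compl, fun x hx s hxs hsB => hx (ih.2 hsB (M.relT_symm' Λ hxs))⟩
  | iUnion f _ ih =>
      refine ⟨MeasurableSet.iUnion fun n => (ih n).1, fun x hx s hxs => ?_⟩
      obtain ⟨n, hn⟩ := Set.mem_iUnion.mp hx
      exact Set.mem_iUnion.mpr ⟨n, (ih n).2 hn hxs⟩

open LMP in
private lemma LMP.Gop_mono' {S L : Type*} [MeasurableSpace S] (M : LMP S L)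
    {Λ Λ' : Set (Set S)} (h : Λ ⊆ Λ') : M.Gop Λ ⊆ M.Gop Λ' := by
  intro A hA
  exact ⟨hA.1, fun x hx s hxs => hA.2 hx (fun a E hE => hxs a E (h hE))⟩

open LMP in
/-- If `Sig₀ ⊆ Σ` is a sub-σ-algebra with `R(Sig₀) = R^T(Sig₀)`, then the transfinite sequence
`Σ_α := 𝒢^α(Sig₀)` is increasing: `Σ_α ⊆ Σ_{α+1}`. -/
theorem Giter_subset_succ
    {S L : Type*} [MeasurableSpace S] [Countable L]
    (M : LMP S L) (Sig₀ : Set (Set S)) (hSig₀ : IsSubSigmaAlgebra Sig₀)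
    (h : rel Sig₀ = M.relT Sig₀) (α : Ordinal) :
    M.Giter Sig₀ α ⊆ M.Giter Sig₀ (α + 1) := by
  have hsucc : ∀ β : Ordinal, M.Giter Sig₀ (β + 1) = M.Gop (M.Giter Sig₀ β) := by
    intro β
    rw [Ordinal.add_one_eq_succ]
    exact Ordinal.limitRecOn_succ _ _ _ _
  have hbase : Sig₀ ⊆ M.Gop Sig₀ := by
    intro A hA
    refine ⟨hSig₀.subset_meas A hA, ?_⟩
    intro x hx s hxs
    rw [← h] at hxs
    exact (hxs A hA).mp hx
  have key : ∀ α : Ordinal,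
      M.Giter Sig₀ α ⊆ M.Gop (M.Giter Sig₀ α) ∧
        ∀ β ≤ α, M.Giter Sig₀ β ⊆ M.Giter Sig₀ α := by
    intro α
    induction α using Ordinal.induction with
    | h α IH =>
      rcases Ordinal.zero_or_succ_or_isSuccLimit α with h0 | ⟨γ, hγ⟩ | hlim
      · subst h0
        have e : M.Giter Sig₀ 0 = Sig₀ := Ordinal.limitRecOn_zero _ _ _
        constructor
        · rw [e]; exact hbase
        · intro β hβ
          rw [nonpos_iff_eq_zero.mp hβ]
      · subst hγ
        have hγlt : γ < Order.succ γ := Order.lt_succ γ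
        have e : M.Giter Sig₀ (Order.succ γ) = M.Gop (M.Giter Sig₀ γ) :=
          Ordinal.limitRecOn_succ _ _ _ _
        have h1 : M.Giter Sig₀ γ ⊆ M.Gop (M.Giter Sig₀ γ) := (IH γ hγlt).1
        constructor
        · have h2 : M.Gop (M.Giter Sig₀ γ) ⊆ M.Gop (M.Gop (M.Giter Sig₀ γ)) :=
            M.Gop_mono' h1
          rw [e]
          exact h2
        · intro β hβ
          rcases eq_or_lt_of_le hβ with rfl | hβ'
          · exact subset_rfl
          · have : β ≤ γ := Order.lt_succ_iff.mp hβ'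
            rw [e]
            exact fun A hA => h1 ((IH γ hγlt).2 β this hA)
      · have e : M.Giter Sig₀ α =
            sigmaGen (⋃ (o' : Ordinal) (_ : o' < α), M.Giter Sig₀ o') :=
          Ordinal.limitRecOn_limit _ _ _ _ hlim
        have hmono : ∀ β ≤ α, M.Giter Sig₀ β ⊆ M.Giter Sig₀ α := by
          intro β hβ
          rcases eq_or_lt_of_le hβ with rfl | hβ'
          · exact subset_rfl
          · rw [e]
            intro A hA
            exact MeasurableSpace.measurableSet_generateFrom
              (Set.mem_iUnion.mpr ⟨β, Set.mem_iUnion.mpr ⟨hβ', hA⟩⟩)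
        refine ⟨?_, hmono⟩
        have hU : (⋃ (o' : Ordinal) (_ : o' < α), M.Giter Sig₀ o') ⊆
            sigmaCl (M.relT (M.Giter Sig₀ α)) := by
          intro A hA
          obtain ⟨β, hβ⟩ := Set.mem_iUnion.mp hA
          obtain ⟨hβlt, hAβ⟩ := Set.mem_iUnion.mp hβ
          exact M.Gop_mono' (hmono β hβlt.le) ((IH β hβlt).1 hAβ)
        intro A hA
        rw [e] at hA
        exact M.sigmaGen_subset_sigmaCl' _ hU hA
  rw [hsucc α]
  exact (key α).1
end

section
/- Let (S, Σ, {τ_a : a ∈ L}) be an LMP and Σ₀ ⊆ Σ a sub-σ-algebra such that R(Σ₀) = R^T(Σ₀); set Σ_α := G^α(Σ₀). Then for every limit ordinal λ, R(Σ_λ) = R^T(Σ_λ). -/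
open MeasureTheory

section Aux

open LMP MeasurableSpace

variable {S L : Type*} [MeasurableSpace S]

lemma aux_giter_zero (M : LMP S L) (Λ : Set (Set S)) : M.Giter Λ 0 = Λ :=
  Ordinal.limitRecOn_zero ..

lemma aux_giter_succ (M : LMP S L) (Λ : Set (Set S)) (o : Ordinal) :
    M.Giter Λ (Order.succ o) = M.Gop (M.Giter Λ o) :=
  Ordinal.limitRecOn_succ ..

lemma aux_giter_limit (M : LMP S L) (Λ : Set (Set S)) {o : Ordinal} (ho : Order.IsSuccLimit o) :
    M.Giter Λ o = sigmaGen (⋃ (o' : Ordinal) (_ : o' < o), M.Giter Λ o') := by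
  rw [Giter, Ordinal.limitRecOn_limit _ _ _ _ ho]
  rfl

lemma aux_relT_anti (M : LMP S L) {Λ Λ' : Set (Set S)} (h : Λ ⊆ Λ') :
    M.relT Λ' ⊆ M.relT Λ :=
  fun _ hp a E hE => hp a E (h hE)

lemma aux_rel_anti {Λ Λ' : Set (Set S)} (h : Λ ⊆ Λ') : rel Λ' ⊆ rel Λ :=
  fun _ hp A hA => hp A (h hA)

lemma aux_mem_sigmaGen {U : Set (Set S)} {A : Set S} (hA : A ∈ U) : A ∈ sigmaGen U :=
  measurableSet_generateFrom hA

lemma aux_rel_sigmaGen (U : Set (Set S)) : rel (sigmaGen U) = rel U := by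
  refine subset_antisymm (aux_rel_anti fun A hA => aux_mem_sigmaGen hA) ?_
  rintro ⟨s, t⟩ hst A hA
  refine MeasurableSpace.generateFrom_induction U
    (fun (A : Set S) (_ : MeasurableSet[generateFrom U] A) => (s ∈ A ↔ t ∈ A))
    (fun B hB _ => hst B hB) (by simp) ?_ ?_ A hA
  · intro B _ hB
    simpa using not_congr hB
  · intro f _ hf
    simp only [Set.mem_iUnion]
    exact exists_congr hf

/-- The key successor identity: `R(𝒢(Λ)) = R^T(Λ)`. -/
lemma aux_rel_gop (M : LMP S L) (Λ : Set (Set S)) (hΛ : ∀ A ∈ Λ, MeasurableSet A) :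
    rel (M.Gop Λ) = M.relT Λ := by
  ext ⟨s, t⟩
  constructor
  · intro hst a E hE
    have hm : Measurable fun u => M.τ a u E := M.measurable_eval a E (hΛ E hE)
    have key : ∀ c : ENNReal, c < M.τ a s E ↔ c < M.τ a t E := by
      intro c
      have hBmem : {u : S | c < M.τ a u E} ∈ M.Gop Λ := by
        refine ⟨measurableSet_lt measurable_const hm, ?_⟩
        intro x hx u hxu
        have := hxu a E hE
        simp only [Set.mem_setOf_eq] at hx ⊢
        rw [← this]
        exact hx
      exact hst _ hBmem
    exact le_antisymm (le_of_forall_lt fun c hc => (key c).mp hc)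
      (le_of_forall_lt fun c hc => (key c).mpr hc)
  · rintro hst A ⟨hAm, hAc⟩
    have hsymm : (t, s) ∈ M.relT Λ := fun a E hE => (hst a E hE).symm
    exact ⟨fun hs => hAc hs hst, fun ht => hAc ht hsymm⟩

/-- The transfinite iterates of `𝒢` form increasing π-systems of measurable,
`relT`-closed sets. -/
lemma aux_giter_props (M : LMP S L) (Sig₀ : Set (Set S)) (hSig₀ : IsSubSigmaAlgebra Sig₀)
    (h : rel Sig₀ = M.relT Sig₀) (α : Ordinal) :
    (∀ A ∈ M.Giter Sig₀ α, MeasurableSet A) ∧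
    (∀ β ≤ α, M.Giter Sig₀ β ⊆ M.Giter Sig₀ α) ∧
    (∀ A ∈ M.Giter Sig₀ α, RClosed (M.relT (M.Giter Sig₀ α)) A) ∧
    (∀ A ∈ M.Giter Sig₀ α, ∀ B ∈ M.Giter Sig₀ α, A ∩ B ∈ M.Giter Sig₀ α) := by
  induction α using Ordinal.induction with
  | h α ih =>
  rcases Ordinal.zero_or_succ_or_isSuccLimit α with rfl | ⟨γ, rfl⟩ | hα
  · rw [aux_giter_zero]
    refine ⟨hSig₀.subset_meas, ?_, ?_, ?_⟩
    · intro β hβ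
      rw [nonpos_iff_eq_zero] at hβ
      subst hβ
      rw [aux_giter_zero]
    · intro A hA x hx u hxu
      have hxu' : (x, u) ∈ rel Sig₀ := by rw [h]; exact hxu
      exact (hxu' A hA).mp hx
    · intro A hA B hB
      have hf : ∀ n : ℕ, (if n = 0 then Aᶜ else Bᶜ) ∈ Sig₀ := by
        intro n
        split
        · exact hSig₀.compl_mem A hA
        · exact hSig₀.compl_mem B hB
      have hu : (⋃ n : ℕ, if n = 0 then Aᶜ else Bᶜ) ∈ Sig₀ := hSig₀.iUnion_mem _ hf
      have he : (⋃ n : ℕ, if n = 0 then Aᶜ else Bᶜ) = Aᶜ ∪ Bᶜ := by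
        ext x
        simp only [Set.mem_iUnion, Set.mem_union]
        constructor
        · rintro ⟨n, hn⟩
          split at hn
          · exact Or.inl hn
          · exact Or.inr hn
        · rintro (hx | hx)
          · exact ⟨0, by simpa using hx⟩
          · exact ⟨1, by simpa using hx⟩
        
      rw [he] at hu
      have := hSig₀.compl_mem _ hu
      rwa [Set.compl_union, compl_compl, compl_compl] at this
  · have hγ : γ < Order.succ γ := Order.lt_succ γ
    have Pγ := ih γ hγ
    rw [aux_giter_succ]
    have hsub : M.Giter Sig₀ γ ⊆ M.Gop (M.Giter Sig₀ γ) := by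
      intro A hA
      exact ⟨Pγ.1 A hA, Pγ.2.2.1 A hA⟩
    refine ⟨fun A hA => hA.1, ?_, ?_, ?_⟩
    · intro β hβ
      rcases eq_or_lt_of_le hβ with rfl | hβ'
      · rw [aux_giter_succ]
      · exact (Pγ.2.1 β (Order.lt_succ_iff.mp hβ')).trans hsub
    · intro A hA x hx u hxu
      refine hA.2 hx ?_
      have : M.Giter Sig₀ γ ⊆ M.Gop (M.Giter Sig₀ γ) := hsub
      rw [← aux_giter_succ] at this
      exact aux_relT_anti M (by rw [aux_giter_succ] at this; exact this) hxu
    · rintro A ⟨hAm, hAc⟩ B ⟨hBm, hBc⟩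
      exact ⟨hAm.inter hBm, fun x hx u hxu => ⟨hAc hx.1 hxu, hBc hx.2 hxu⟩⟩
  · rw [aux_giter_limit M Sig₀ hα]
    set U : Set (Set S) := ⋃ (o' : Ordinal) (_ : o' < α), M.Giter Sig₀ o' with hUdef
    have hUmeas : ∀ A ∈ U, MeasurableSet A := by
      intro A hA
      rw [hUdef] at hA
      obtain ⟨β, hβ, hAβ⟩ := Set.mem_iUnion₂.mp hA
      exact (ih β hβ).1 A hAβ
    have hmeas : ∀ A ∈ sigmaGen U, MeasurableSet A := by
      intro A hA
      exact MeasurableSpace.generateFrom_le hUmeas _ hA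
    have hmono : ∀ β ≤ α, M.Giter Sig₀ β ⊆ sigmaGen U := by
      intro β hβ
      rcases eq_or_lt_of_le hβ with rfl | hβ'
      · rw [aux_giter_limit M Sig₀ hα]
      · exact fun A hA => aux_mem_sigmaGen (Set.mem_iUnion₂.mpr ⟨β, hβ', hA⟩)
    refine ⟨hmeas, hmono, ?_, ?_⟩
    · intro A hA
      refine MeasurableSpace.generateFrom_induction U
        (fun (A : Set S) (_ : MeasurableSet[generateFrom U] A) =>
          RClosed (M.relT (sigmaGen U)) A)
        ?_ ?_ ?_ ?_ A hA
      · intro B hB _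
        rw [hUdef] at hB
        obtain ⟨β, hβ, hBβ⟩ := Set.mem_iUnion₂.mp hB
        intro x hx u hxu
        exact (ih β hβ).2.2.1 B hBβ hx
          (aux_relT_anti M (hmono β hβ.le) hxu)
      · intro x hx
        exact absurd hx (Set.notMem_empty x)
      · intro B _ hB x hx u hxu
        intro huB
        exact hx (hB huB (fun a E hE => (hxu a E hE).symm))
      · intro f _ hf x hx u hxu
        obtain ⟨n, hn⟩ := Set.mem_iUnion.mp hx
        exact Set.mem_iUnion.mpr ⟨n, hf n hn hxu⟩
    · intro A hA B hB
      exact @MeasurableSet.inter S (generateFrom U) A B hA hB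

end Aux

open LMP in
/-- If `Sig₀ ⊆ Σ` is a sub-σ-algebra with `R(Sig₀) = R^T(Sig₀)`, then for every limit ordinal `λ`,
`R(Σ_λ) = R^T(Σ_λ)`, where `Σ_α := 𝒢^α(Sig₀)`. -/
theorem rel_Giter_eq_relT_Giter_of_isLimit
    {S L : Type*} [MeasurableSpace S] [Countable L]
    (M : LMP S L) (Sig₀ : Set (Set S)) (hSig₀ : IsSubSigmaAlgebra Sig₀)
    (h : rel Sig₀ = M.relT Sig₀) (lam : Ordinal) (hlam : Order.IsSuccLimit lam) :
    rel (M.Giter Sig₀ lam) = M.relT (M.Giter Sig₀ lam) := by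
  have P := aux_giter_props M Sig₀ hSig₀ h
  have hlim := aux_giter_limit M Sig₀ hlam
  set U : Set (Set S) := ⋃ (o' : Ordinal) (_ : o' < lam), M.Giter Sig₀ o' with hUdef
  -- every level sits inside U
  have hlev : ∀ β < lam, M.Giter Sig₀ β ⊆ U :=
    fun β hβ A hA => Set.mem_iUnion₂.mpr ⟨β, hβ, hA⟩
  have hUmeas : ∀ A ∈ U, MeasurableSet A := by
    intro A hA
    obtain ⟨β, hβ, hAβ⟩ := Set.mem_iUnion₂.mp hA
    exact (P β).1 A hAβ
  -- U is a π-system containing univ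
  have hUinter : ∀ A ∈ U, ∀ B ∈ U, A ∩ B ∈ U := by
    intro A hA B hB
    obtain ⟨β₁, hβ₁, hA₁⟩ := Set.mem_iUnion₂.mp hA
    obtain ⟨β₂, hβ₂, hB₂⟩ := Set.mem_iUnion₂.mp hB
    refine hlev (max β₁ β₂) (max_lt hβ₁ hβ₂) ?_
    exact (P (max β₁ β₂)).2.2.2 A ((P (max β₁ β₂)).2.1 β₁ (le_max_left _ _) hA₁)
      B ((P (max β₁ β₂)).2.1 β₂ (le_max_right _ _) hB₂)
  have hUuniv : (Set.univ : Set S) ∈ U := by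
    refine hlev 0 hlam.pos ?_
    rw [aux_giter_zero]
    have := hSig₀.compl_mem ∅ hSig₀.empty_mem
    rwa [Set.compl_empty] at this
  -- rel(Σ_λ) = rel(U)
  have h1 : rel (M.Giter Sig₀ lam) = rel U := by
    rw [hlim]
    exact aux_rel_sigmaGen U
  -- relT(Σ_λ) = relT(U)
  have h2 : M.relT (M.Giter Sig₀ lam) = M.relT U := by
    rw [hlim]
    refine subset_antisymm (aux_relT_anti M fun A hA => aux_mem_sigmaGen hA) ?_
    rintro ⟨s, t⟩ hst a E hE
    haveI : IsFiniteMeasure (M.τ a s) :=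
      ⟨lt_of_le_of_lt (M.prob_le_one a s) ENNReal.one_lt_top⟩
    exact MeasureTheory.ext_on_measurableSpace_of_generate_finite ‹MeasurableSpace S› U
      (fun B hB => hst a B hB) (MeasurableSpace.generateFrom_le hUmeas) rfl
      (fun A hA B hB _ => hUinter A hA B hB) (hst a Set.univ hUuniv) hE
  -- rel(U) = relT(U) by the successor identity
  have h3 : rel U = M.relT U := by
    apply subset_antisymm
    · rintro ⟨s, t⟩ hst a E hE
      obtain ⟨β, hβ, hEβ⟩ := Set.mem_iUnion₂.mp hE
      have hsucc : Order.succ β < lam := hlam.succ_lt hβ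
      have hst' : (s, t) ∈ rel (M.Giter Sig₀ (Order.succ β)) :=
        aux_rel_anti (hlev _ hsucc) hst
      rw [aux_giter_succ, aux_rel_gop M _ (P β).1] at hst'
      exact hst' a E hEβ
    · rintro ⟨s, t⟩ hst A hA
      obtain ⟨β, hβ, hAβ⟩ := Set.mem_iUnion₂.mp hA
      have hst' : (s, t) ∈ M.relT (M.Giter Sig₀ β) :=
        aux_relT_anti M (hlev β hβ) hst
      rw [← aux_rel_gop M _ (P β).1, ← aux_giter_succ] at hst'
      exact hst' A ((P (Order.succ β)).2.1 β (Order.lt_succ β).le hAβ)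
  rw [h1, h2, h3]
end

section
/- Let (S, Σ, {τ_a : a ∈ L}) be an LMP. For every sub-σ-algebra Λ ⊆ Σ, G(Λ) = Σ(R(G(Λ))): the σ-algebra G(Λ) consists exactly of the measurable sets that are closed under the relation R(G(Λ)). -/
open MeasureTheory

open LMP in
/-- For every sub-σ-algebra `Λ ⊆ Σ`, `𝒢(Λ) = Σ(R(𝒢(Λ)))`: the σ-algebra `𝒢(Λ)` consists
exactly of the measurable sets closed under the relation `R(𝒢(Λ))`. -/
theorem Gop_eq_sigmaCl_rel_Gop
    {S L : Type*} [MeasurableSpace S] [Countable L]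
    (M : LMP S L) (Λ : Set (Set S)) (hΛ : IsSubSigmaAlgebra Λ) :
    M.Gop Λ = sigmaCl (rel (M.Gop Λ)) := by
  ext A
  constructor
  · rintro ⟨hm, hc⟩
    exact ⟨hm, fun x hx s hs => (hs A ⟨hm, hc⟩).mp hx⟩
  · rintro ⟨hm, hc⟩
    refine ⟨hm, fun x hx s hs => hc hx ?_⟩
    intro B hB
    exact ⟨fun hxB => hB.2 hxB hs, fun hsB => hB.2 hsB (fun a E hE => (hs a E hE).symm)⟩
end

section
/- Let (S, Σ, {τ_a : a ∈ L}) be an LMP and Λ ⊆ Σ a sub-σ-algebra such that Σ(R(Λ)) = Λ. Then the following are equivalent: (1) Λ is stable; (2) R(Λ) ⊆ R^T(Λ); (3) R(Λ) is a state bisimulation. -/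
open MeasureTheory

open LMP in
lemma ennreal_eq_of_rat_lt {x y : ENNReal} (hx : x ≤ 1) (hy : y ≤ 1)
    (h : ∀ q : ℚ, 0 ≤ q → q ≤ 1 → (ENNReal.ofReal (q : ℝ) < x ↔ ENNReal.ofReal (q : ℝ) < y)) :
    x = y := by
  have hxt : x ≠ ⊤ := (hx.trans_lt ENNReal.one_lt_top).ne
  have hyt : y ≠ ⊤ := (hy.trans_lt ENNReal.one_lt_top).ne
  by_contra hne
  rcases lt_or_gt_of_ne hne with hlt | hlt
  · obtain ⟨q, hq1, hq2⟩ := exists_rat_btwn ((ENNReal.toReal_lt_toReal hxt hyt).2 hlt)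
    have hq0 : (0:ℚ) ≤ q := by
      exact_mod_cast (ENNReal.toReal_nonneg.trans hq1.le)
    have hq1' : (q:ℚ) ≤ 1 := by
      have : y.toReal ≤ 1 := by
        simpa using (ENNReal.toReal_le_toReal hyt (by simp)).2 hy
      exact_mod_cast hq2.le.trans this
    have hlty : ENNReal.ofReal (q : ℝ) < y :=
      (ENNReal.ofReal_lt_iff_lt_toReal (by exact_mod_cast hq0) hyt).2 hq2
    have hgex : x ≤ ENNReal.ofReal (q : ℝ) := by
      calc x = ENNReal.ofReal x.toReal := (ENNReal.ofReal_toReal hxt).symm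
        _ ≤ ENNReal.ofReal (q : ℝ) := ENNReal.ofReal_le_ofReal hq1.le
    exact absurd ((h q hq0 hq1').2 hlty) (not_lt.2 hgex)
  · obtain ⟨q, hq1, hq2⟩ := exists_rat_btwn ((ENNReal.toReal_lt_toReal hyt hxt).2 hlt)
    have hq0 : (0:ℚ) ≤ q := by
      exact_mod_cast (ENNReal.toReal_nonneg.trans hq1.le)
    have hq1' : (q:ℚ) ≤ 1 := by
      have : x.toReal ≤ 1 := by
        simpa using (ENNReal.toReal_le_toReal hxt (by simp)).2 hx
      exact_mod_cast hq2.le.trans this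
    have hltx : ENNReal.ofReal (q : ℝ) < x :=
      (ENNReal.ofReal_lt_iff_lt_toReal (by exact_mod_cast hq0) hxt).2 hq2
    have hgey : y ≤ ENNReal.ofReal (q : ℝ) := by
      calc y = ENNReal.ofReal y.toReal := (ENNReal.ofReal_toReal hyt).symm
        _ ≤ ENNReal.ofReal (q : ℝ) := ENNReal.ofReal_le_ofReal hq1.le
    exact absurd ((h q hq0 hq1').1 hltx) (not_lt.2 hgey)

open LMP in
/-- Let `Λ ⊆ Σ` be a sub-σ-algebra with `Σ(R(Λ)) = Λ`. Then the following are equivalent: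
(1) `Λ` is stable; (2) `R(Λ) ⊆ R^T(Λ)`; (3) `R(Λ)` is a state bisimulation. -/
theorem stable_iff_rel_subset_relT_iff_isStateBisim
    {S L : Type*} [MeasurableSpace S] [Countable L]
    (M : LMP S L) (Λ : Set (Set S)) (hΛ : IsSubSigmaAlgebra Λ)
    (hfix : sigmaCl (rel Λ) = Λ) :
    (M.Stable Λ ↔ rel Λ ⊆ M.relT Λ) ∧
      (rel Λ ⊆ M.relT Λ ↔ M.IsStateBisim (rel Λ)) := by
  have hle1 : ∀ (a : L) (s : S) (E : Set S), M.τ a s E ≤ 1 := fun a s E =>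
    le_trans (measure_mono (Set.subset_univ E)) (M.prob_le_one a s)
  have h12 : M.Stable Λ ↔ rel Λ ⊆ M.relT Λ := by
    constructor
    · intro hst p hp a E hE
      refine ennreal_eq_of_rat_lt (hle1 a p.1 E) (hle1 a p.2 E) ?_
      intro q hq0 hq1
      exact hp _ (hst E hE q hq0 hq1 a)
    · intro hsub A hA q hq0 hq1 a
      rw [← hfix]
      refine ⟨measurableSet_lt measurable_const
        (M.measurable_eval a A (hΛ.subset_meas A hA)), ?_⟩
      intro x hx s hxs
      have := hsub hxs a A hA
      simpa [Set.mem_setOf_eq, ← this] using hx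
  refine ⟨h12, ?_⟩
  constructor
  · intro hsub
    refine ⟨fun p hp A hA => (hp A hA).symm, ?_⟩
    intro p hp a C hC
    rw [hfix] at hC
    exact hsub hp a C hC
  · intro hbis p hp a E hE
    exact hbis.2 p hp a E (by rw [hfix]; exact hE)
end

section
/- Let (S, Σ, {τ_a : a ∈ L}) be an LMP, set Σ₀ := σ(⟦𝓛⟧) and Σ_α := G^α(Σ₀). Then for every limit ordinal λ, the σ-algebra Σ_λ is stable. -/
open MeasureTheory

namespace LMP

variable {S L : Type*} [MeasurableSpace S]

lemma relT_symm (M : LMP S L) {Λ : Set (Set S)} {p : S × S} (h : p ∈ M.relT Λ) :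
    (p.2, p.1) ∈ M.relT Λ := fun a E hE => (h a E hE).symm

lemma relT_antitone (M : LMP S L) {Λ₁ Λ₂ : Set (Set S)} (h : Λ₁ ⊆ Λ₂) :
    M.relT Λ₂ ⊆ M.relT Λ₁ := fun _p hp a E hE => hp a E (h hE)

lemma RClosed.mono {R R' : Set (S × S)} {A : Set S} (hA : RClosed R A) (h : R' ⊆ R) :
    RClosed R' A := fun _x hx _s hxs => hA hx (h hxs)

/-- The σ-algebra of measurable `relT Λ`-closed sets, as a `MeasurableSpace`. -/
def clSpace (M : LMP S L) (Λ : Set (Set S)) : MeasurableSpace S where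
  MeasurableSet' A := MeasurableSet A ∧ RClosed (M.relT Λ) A
  measurableSet_empty := ⟨MeasurableSet.empty, fun x hx => absurd hx (Set.notMem_empty x)⟩
  measurableSet_compl := fun A hA =>
    ⟨hA.1.compl, fun x hx s hxs hsA => hx (hA.2 hsA (M.relT_symm hxs))⟩
  measurableSet_iUnion := fun f hf =>
    ⟨MeasurableSet.iUnion fun n => (hf n).1, by
      intro x hx s hxs
      rcases Set.mem_iUnion.mp hx with ⟨n, hn⟩
      exact Set.mem_iUnion.mpr ⟨n, (hf n).2 hn hxs⟩⟩

lemma mem_clSpace_iff (M : LMP S L) (Λ : Set (Set S)) (A : Set S) :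
    MeasurableSet[M.clSpace Λ] A ↔ MeasurableSet A ∧ RClosed (M.relT Λ) A := Iff.rfl

lemma Giter_zero (M : LMP S L) (Λ : Set (Set S)) : M.Giter Λ 0 = Λ :=
  Ordinal.limitRecOn_zero _ _ _

lemma Giter_succ (M : LMP S L) (Λ : Set (Set S)) (α : Ordinal) :
    M.Giter Λ (Order.succ α) = M.Gop (M.Giter Λ α) :=
  Ordinal.limitRecOn_succ _ _ _ _

lemma Giter_limit (M : LMP S L) (Λ : Set (Set S)) {α : Ordinal} (h : Order.IsSuccLimit α) :
    M.Giter Λ α = sigmaGen (⋃ (β : Ordinal) (_ : β < α), M.Giter Λ β) :=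
  Ordinal.limitRecOn_limit _ _ _ _ h

lemma mem_sigmaGen_of_le {U : Set (Set S)} {m' : MeasurableSpace S}
    (h : ∀ A ∈ U, MeasurableSet[m'] A) {A : Set S} (hA : A ∈ sigmaGen U) :
    MeasurableSet[m'] A :=
  MeasurableSpace.generateFrom_le h A hA

lemma sem_measurable (M : LMP S L) : ∀ φ : LForm L, MeasurableSet (M.sem φ)
  | LForm.top => MeasurableSet.univ
  | LForm.and φ ψ => (M.sem_measurable φ).inter (M.sem_measurable ψ)
  | LForm.dia a q φ =>
      measurableSet_lt measurable_const (M.measurable_eval a _ (M.sem_measurable φ))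

lemma sem_mem_clSpace (M : LMP S L) :
    ∀ φ : LForm L, MeasurableSet[M.clSpace M.sigmaLogic] (M.sem φ) := by
  intro φ
  induction φ with
  | top => exact ⟨MeasurableSet.univ, fun x _ s _ => Set.mem_univ s⟩
  | and φ ψ ihφ ihψ =>
      exact ⟨ihφ.1.inter ihψ.1, fun x hx s hxs => ⟨ihφ.2 hx.1 hxs, ihψ.2 hx.2 hxs⟩⟩
  | dia a q φ ih =>
      refine ⟨M.sem_measurable (LForm.dia a q φ), ?_⟩
      intro x hx s hxs
      have hφ : M.sem φ ∈ M.sigmaLogic :=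
        MeasurableSpace.measurableSet_generateFrom ⟨φ, rfl⟩
      have := hxs a (M.sem φ) hφ
      simpa [sem, ← this] using hx

/-- The key invariant: every member of `Σ_α` is measurable and `relT Σ_α`-closed. -/
lemma giter_good (M : LMP S L) :
    ∀ α : Ordinal, ∀ A ∈ M.Giter M.sigmaLogic α,
      MeasurableSet A ∧ RClosed (M.relT (M.Giter M.sigmaLogic α)) A := by
  intro α
  induction α using Ordinal.induction with
  | h α IH =>
    rcases Ordinal.zero_or_succ_or_isSuccLimit α with h0 | ⟨γ, rfl⟩ | hα
    · subst h0
      rw [M.Giter_zero]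
      intro A hA
      exact mem_sigmaGen_of_le (fun B hB => by
        rcases hB with ⟨φ, rfl⟩; exact M.sem_mem_clSpace φ) hA
    · rw [M.Giter_succ]
      intro A hA
      refine ⟨hA.1, hA.2.mono (M.relT_antitone ?_)⟩
      intro B hB
      exact IH γ (Order.lt_succ γ) B hB
    · intro A hA
      rw [M.Giter_limit _ hα] at hA
      have hsub : ∀ β < α, M.Giter M.sigmaLogic β ⊆ M.Giter M.sigmaLogic α := by
        intro β hβ B hB
        rw [M.Giter_limit _ hα]
        exact MeasurableSpace.measurableSet_generateFrom (Set.mem_iUnion₂.mpr ⟨β, hβ, hB⟩)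
      refine mem_sigmaGen_of_le (m' := M.clSpace (M.Giter M.sigmaLogic α)) ?_ hA
      intro B hB
      rcases Set.mem_iUnion₂.mp hB with ⟨β, hβ, hBβ⟩
      obtain ⟨hm, hc⟩ := IH β hβ B hBβ
      exact ⟨hm, hc.mono (M.relT_antitone (hsub β hβ))⟩

lemma giter_mono (M : LMP S L) :
    ∀ β α : Ordinal, α ≤ β → M.Giter M.sigmaLogic α ⊆ M.Giter M.sigmaLogic β := by
  intro β
  induction β using Ordinal.induction with
  | h β IH =>
    intro α hαβ
    rcases eq_or_lt_of_le hαβ with rfl | hlt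
    · exact subset_rfl
    rcases Ordinal.zero_or_succ_or_isSuccLimit β with h0 | ⟨γ, rfl⟩ | hβ
    · exact absurd (h0 ▸ hlt) (not_lt_zero (a := α))
    · have h1 : α ≤ γ := Order.lt_succ_iff.mp hlt
      rw [M.Giter_succ]
      refine (IH γ (Order.lt_succ γ) α h1).trans ?_
      intro A hA
      exact M.giter_good γ A hA
    · intro A hA
      rw [M.Giter_limit _ hβ]
      exact MeasurableSpace.measurableSet_generateFrom (Set.mem_iUnion₂.mpr ⟨α, hlt, hA⟩)

lemma giter_inter (M : LMP S L) (α : Ordinal) {A B : Set S}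
    (hA : A ∈ M.Giter M.sigmaLogic α) (hB : B ∈ M.Giter M.sigmaLogic α) :
    A ∩ B ∈ M.Giter M.sigmaLogic α := by
  rcases Ordinal.zero_or_succ_or_isSuccLimit α with h0 | ⟨γ, rfl⟩ | hα
  · subst h0; rw [M.Giter_zero] at *
    exact @MeasurableSet.inter S (MeasurableSpace.generateFrom (Set.range M.sem)) A B hA hB
  · rw [M.Giter_succ] at *
    exact ⟨hA.1.inter hB.1, fun x hx s hxs => ⟨hA.2 hx.1 hxs, hB.2 hx.2 hxs⟩⟩
  · rw [M.Giter_limit _ hα] at *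
    exact @MeasurableSet.inter S (MeasurableSpace.generateFrom _) A B hA hB

end LMP


open LMP in
/-- With `Σ₀ := σ(⟦𝓛⟧)` and `Σ_α := 𝒢^α(Σ₀)`, the σ-algebra `Σ_λ` is stable for every
limit ordinal `λ`. -/
theorem stable_Giter_sigmaLogic_of_isLimit
    {S L : Type*} [MeasurableSpace S] [Countable L]
    (M : LMP S L) (lam : Ordinal) (hlam : Order.IsSuccLimit lam) :
    M.Stable (M.Giter M.sigmaLogic lam) := by
  classical
  set U : Set (Set S) := ⋃ (β : Ordinal) (_ : β < lam), M.Giter M.sigmaLogic β with hU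
  have hGl : M.Giter M.sigmaLogic lam = sigmaGen U := M.Giter_limit _ hlam
  -- the generated σ-algebra is coarser than the ambient one
  have hma : MeasurableSpace.generateFrom U ≤ ‹MeasurableSpace S› := by
    refine MeasurableSpace.generateFrom_le ?_
    intro B hB
    rcases Set.mem_iUnion₂.mp hB with ⟨β, _, hBβ⟩
    exact (M.giter_good β B hBβ).1
  -- the union is a π-system
  have hpi : IsPiSystem U := by
    intro A hA B hB _
    rcases Set.mem_iUnion₂.mp hA with ⟨β₁, hβ₁, hA₁⟩
    rcases Set.mem_iUnion₂.mp hB with ⟨β₂, hβ₂, hB₂⟩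
    have hA' := M.giter_mono (max β₁ β₂) β₁ (le_max_left _ _) hA₁
    have hB' := M.giter_mono (max β₁ β₂) β₂ (le_max_right _ _) hB₂
    exact Set.mem_iUnion₂.mpr ⟨max β₁ β₂, max_lt hβ₁ hβ₂, M.giter_inter _ hA' hB'⟩
  -- for sets lying in some Σ_β with β < lam, evaluation is measurable for generateFrom U
  have hbasic : ∀ β < lam, ∀ B ∈ M.Giter M.sigmaLogic β, ∀ a : L,
      Measurable[MeasurableSpace.generateFrom U] fun s => M.τ a s B := by
    intro β hβ B hB a
    refine measurable_of_Ioi (mδ := MeasurableSpace.generateFrom U) ?_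
    intro c
    have hmem : (fun s => M.τ a s B) ⁻¹' Set.Ioi c
        ∈ M.Giter M.sigmaLogic (Order.succ β) := by
      rw [M.Giter_succ]
      refine ⟨measurableSet_lt measurable_const
        (M.measurable_eval a B (M.giter_good β B hB).1), ?_⟩
      intro x hx s hxs
      have hEq := hxs a B hB
      simpa [Set.mem_preimage, ← hEq] using hx
    exact MeasurableSpace.measurableSet_generateFrom
      (Set.mem_iUnion₂.mpr ⟨Order.succ β, hlam.succ_lt hβ, hmem⟩)
  -- by π-λ induction, evaluation is measurable for every generateFrom U-measurable set
  have key : ∀ ⦃B : Set S⦄, MeasurableSet[MeasurableSpace.generateFrom U] B → ∀ a : L,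
      Measurable[MeasurableSpace.generateFrom U] fun s => M.τ a s B := by
    refine MeasurableSpace.induction_on_inter
      (m := MeasurableSpace.generateFrom U)
      (C := fun B _ => ∀ a : L,
        Measurable[MeasurableSpace.generateFrom U] fun s => M.τ a s B)
      rfl hpi ?_ ?_ ?_ ?_
    · intro a
      simpa [measure_empty] using
        (measurable_const :
          Measurable[MeasurableSpace.generateFrom U] fun _ : S => (0 : ENNReal))
    · intro B hB a
      rcases Set.mem_iUnion₂.mp hB with ⟨β, hβ, hBβ⟩
      exact hbasic β hβ B hBβ a
    · intro B hBm hC a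
      have hBmeas : MeasurableSet B := hma B hBm
      have huniv : Measurable[MeasurableSpace.generateFrom U]
          fun s => M.τ a s Set.univ := by
        refine hbasic 0 hlam.pos Set.univ ?_ a
        rw [M.Giter_zero]
        exact (MeasurableSet.univ :
          MeasurableSet[MeasurableSpace.generateFrom (Set.range M.sem)] _)
      have heq : (fun s => M.τ a s Bᶜ) = fun s => M.τ a s Set.univ - M.τ a s B := by
        funext s
        exact measure_compl hBmeas
          (((measure_mono (Set.subset_univ B)).trans (M.prob_le_one a s)).trans_lt
            ENNReal.one_lt_top).ne
      rw [heq]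
      exact Measurable.sub huniv (hC a)
    · intro f hdisj hfm hC a
      have heq : (fun s => M.τ a s (⋃ n, f n)) = fun s => ∑' n, M.τ a s (f n) := by
        funext s
        exact measure_iUnion hdisj fun n => hma _ (hfm n)
      rw [heq]
      exact Measurable.ennreal_tsum fun n => hC n a
  -- conclude
  intro A hA q _ _ a
  rw [hGl] at hA ⊢
  have hAm : MeasurableSet[MeasurableSpace.generateFrom U] A := hA
  have hres : MeasurableSet[MeasurableSpace.generateFrom U]
      ((fun s => M.τ a s A) ⁻¹' Set.Ioi (ENNReal.ofReal (q : ℝ))) :=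
    (key hAm a) measurableSet_Ioi
  exact hres
end

section
/- Let (S, Σ, {τ_a : a ∈ L}) be an LMP and R an equivalence relation on S such that ∼s ⊆ R and O(R) ⊆ R. Then there exists an ordinal α with |α| ≤ |S| such that O^α(R) = ∼s. -/
open MeasureTheory

section Aux

namespace LMP

universe u v

variable {S L : Type u} [MeasurableSpace S]

theorem sigmaCl_anti {R R' : Set (S × S)} (h : R ⊆ R') :
    sigmaCl R' ⊆ sigmaCl R := by
  rintro A ⟨hm, hc⟩
  exact ⟨hm, fun x hx s hs => hc hx (h hs)⟩

theorem Oop_mono (M : LMP S L) {R R' : Set (S × S)} (h : R ⊆ R') :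
    M.Oop R ⊆ M.Oop R' := by
  intro p hp a E hE
  exact hp a E (sigmaCl_anti h hE)

theorem Oiter_zero (M : LMP S L) (R : Set (S × S)) : M.Oiter R 0 = R :=
  Ordinal.limitRecOn_zero ..

theorem Oiter_succ (M : LMP S L) (R : Set (S × S)) (α : Ordinal) :
    M.Oiter R (α + 1) = M.Oop (M.Oiter R α) := by
  rw [Ordinal.add_one_eq_succ]
  exact Ordinal.limitRecOn_succ ..

theorem Oiter_limit (M : LMP S L) (R : Set (S × S)) {α : Ordinal} (h : Order.IsSuccLimit α) :
    M.Oiter R α = ⋂ (β : Ordinal) (_ : β < α), M.Oiter R β :=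
  Ordinal.limitRecOn_limit _ _ _ _ h

/-- Key invariant: each iterate is a pre-fixed point, and the iterates are decreasing. -/
theorem Oiter_key (M : LMP S L) (R : Set (S × S)) (hpre : M.Oop R ⊆ R) :
    ∀ β : Ordinal, M.Oop (M.Oiter R β) ⊆ M.Oiter R β ∧
      ∀ α ≤ β, M.Oiter R β ⊆ M.Oiter R α := by
  intro β
  induction β using Ordinal.induction with
  | h β IH =>
    rcases Ordinal.zero_or_succ_or_isSuccLimit β with h0 | ⟨γ, hγ⟩ | hlim
    · subst h0
      refine ⟨by rw [Oiter_zero]; exact hpre, fun α hα => ?_⟩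
      rw [nonpos_iff_eq_zero] at hα; subst hα; exact subset_rfl
    · subst hγ
      have hγlt : γ < Order.succ γ := Order.lt_succ γ
      have hOs : M.Oiter R (Order.succ γ) = M.Oop (M.Oiter R γ) := by
        rw [← Ordinal.add_one_eq_succ]; exact Oiter_succ ..
      constructor
      · rw [hOs]
        exact M.Oop_mono (IH γ hγlt).1
      · intro α hα
        rcases eq_or_lt_of_le hα with rfl | hlt
        · exact subset_rfl
        · have hαγ : α ≤ γ := Order.lt_succ_iff.1 hlt
          rw [hOs]
          exact ((IH γ hγlt).1.trans ((IH γ hγlt).2 α hαγ))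
    · have hlimit : M.Oiter R β = ⋂ (β' : Ordinal) (_ : β' < β), M.Oiter R β' :=
        Oiter_limit M R hlim
      have hanti : ∀ α ≤ β, M.Oiter R β ⊆ M.Oiter R α := by
        intro α hα
        rcases eq_or_lt_of_le hα with rfl | hlt
        · exact subset_rfl
        · rw [hlimit]; exact Set.biInter_subset_of_mem hlt
      refine ⟨?_, hanti⟩
      intro p hp
      rw [hlimit]
      refine Set.mem_iInter₂.2 fun α hα => ?_
      have hsucc : α + 1 < β := by
        rw [Ordinal.add_one_eq_succ]; exact hlim.succ_lt hα
      have h1 : M.Oop (M.Oiter R β) ⊆ M.Oiter R (α + 1) := by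
        rw [Oiter_succ]
        exact M.Oop_mono (hanti α hα.le)
      exact (IH (α + 1) hsucc).2 α (by rw [Ordinal.add_one_eq_succ]; exact Order.le_succ α)
        (h1 hp)

theorem stateBisim_subset_Oop (M : LMP S L) :
    M.stateBisim ⊆ M.Oop M.stateBisim := by
  rintro p ⟨R₀, hR₀, hpR₀⟩
  intro a E hE
  refine hR₀.2 p hpR₀ a E ?_
  have hsub' : R₀ ⊆ M.stateBisim := fun q hq => ⟨R₀, hR₀, hq⟩
  exact sigmaCl_anti hsub' hE

theorem stateBisim_subset_Oiter (M : LMP S L) (R : Set (S × S))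
    (hsub : M.stateBisim ⊆ R) : ∀ β : Ordinal, M.stateBisim ⊆ M.Oiter R β := by
  intro β
  induction β using Ordinal.induction with
  | h β IH =>
    rcases Ordinal.zero_or_succ_or_isSuccLimit β with h0 | ⟨γ, hγ⟩ | hlim
    · subst h0; rw [Oiter_zero]; exact hsub
    · subst hγ
      have hOs : M.Oiter R (Order.succ γ) = M.Oop (M.Oiter R γ) := by
        rw [← Ordinal.add_one_eq_succ]; exact Oiter_succ ..
      rw [hOs]
      exact M.stateBisim_subset_Oop.trans (M.Oop_mono (IH γ (Order.lt_succ γ)))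
    · rw [Oiter_limit M R hlim]
      intro p hp
      exact Set.mem_iInter₂.2 fun α hα => IH α hα hp

theorem isStateBisim_of_fixed (M : LMP S L) {Q : Set (S × S)} (h : M.Oop Q = Q) :
    M.IsStateBisim Q := by
  constructor
  · intro p hp
    rw [← h] at hp ⊢
    exact fun a E hE => (hp a E hE).symm
  · intro p hp a C hC
    rw [← h] at hp
    exact hp a C hC

theorem Oop_equivalence (M : LMP S L) (R₀ : Set (S × S)) :
    Equivalence fun s t : S => (s, t) ∈ M.Oop R₀ := by
  constructor
  · intro s a E _; rfl
  · intro s t h a E hE; exact (h a E hE).symm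
  · intro s t u h1 h2 a E hE; exact (h1 a E hE).trans (h2 a E hE)

theorem Oiter_equivalence (M : LMP S L) (R : Set (S × S))
    (hequiv : Equivalence fun s t : S => (s, t) ∈ R) :
    ∀ β : Ordinal, Equivalence fun s t : S => (s, t) ∈ M.Oiter R β := by
  intro β
  induction β using Ordinal.induction with
  | h β IH =>
    rcases Ordinal.zero_or_succ_or_isSuccLimit β with h0 | ⟨γ, hγ⟩ | hlim
    · subst h0; rw [Oiter_zero]; exact hequiv
    · subst hγ
      have hOs : M.Oiter R (Order.succ γ) = M.Oop (M.Oiter R γ) := by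
        rw [← Ordinal.add_one_eq_succ]; exact Oiter_succ ..
      rw [hOs]
      exact M.Oop_equivalence _
    · rw [Oiter_limit M R hlim]
      constructor
      · intro s
        exact Set.mem_iInter₂.2 fun α hα => (IH α hα).refl s
      · intro s t h
        exact Set.mem_iInter₂.2 fun α hα =>
          (IH α hα).symm (Set.mem_iInter₂.1 h α hα)
      · intro s t u h1 h2
        exact Set.mem_iInter₂.2 fun α hα =>
          (IH α hα).trans (Set.mem_iInter₂.1 h1 α hα) (Set.mem_iInter₂.1 h2 α hα)

end LMP

end Aux

section Stab

/-- Auxiliary: the `typein` map of the canonical well order on `δ.ToType`. -/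
noncomputable def LMP.tyiAux (δ : Ordinal.{u}) (i : δ.ToType) : Ordinal.{u} :=
  @Ordinal.typein δ.ToType (· < ·) isWellOrder_lt i

theorem LMP.tyiAux_lt_self (δ : Ordinal.{u}) (i : δ.ToType) : LMP.tyiAux δ i < δ :=
  Ordinal.typein_lt_self i

theorem LMP.tyiAux_lt_tyiAux (δ : Ordinal.{u}) {a b : δ.ToType} (h : a < b) :
    LMP.tyiAux δ a < LMP.tyiAux δ b :=
  (@Ordinal.typein_lt_typein δ.ToType (· < ·) isWellOrder_lt a b).2 h

namespace LMP

universe u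

variable {S L : Type u} [MeasurableSpace S]

theorem exists_Oiter_fixed (M : LMP S L) (R : Set (S × S))
    (hequiv : Equivalence fun s t : S => (s, t) ∈ R)
    (hpre : M.Oop R ⊆ R) :
    ∃ α : Ordinal.{u}, α.card ≤ Cardinal.mk S ∧ M.Oiter R α = M.Oiter R (α + 1) := by
  by_contra hcon
  push_neg at hcon
  have hmono : ∀ {α β : Ordinal.{u}}, α ≤ β → M.Oiter R β ⊆ M.Oiter R α := fun {α β} h =>
    (M.Oiter_key R hpre β).2 α h
  have hstrict : ∀ α : Ordinal.{u}, α.card ≤ Cardinal.mk S →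
      M.Oiter R (α + 1) ⊂ M.Oiter R α := by
    intro α hα
    refine (hmono ?_).ssubset_of_ne fun h => hcon α hα h.symm
    rw [Ordinal.add_one_eq_succ]; exact Order.le_succ α
  cases finite_or_infinite S with
  | inl hfin =>
    set n := Nat.card S with hn
    have hκ : (n : Cardinal) = Cardinal.mk S := by
      rw [hn]
      exact Cardinal.cast_toNat_of_lt_aleph0 (Cardinal.lt_aleph0_of_finite S)
    have hEquiv : ∀ k : ℕ, Equivalence fun s t : S => (s, t) ∈ M.Oiter R (k : Ordinal) :=
      fun k => M.Oiter_equivalence R hequiv _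
    let sd : ℕ → Setoid S := fun k => ⟨fun s t => (s, t) ∈ M.Oiter R (k : Ordinal), hEquiv k⟩
    let c : ℕ → ℕ := fun k => Nat.card (Quotient (sd k))
    have hcast : ∀ k : ℕ, ((k + 1 : ℕ) : Ordinal) = (k : Ordinal) + 1 := by
      intro k; push_cast; rfl
    have hstep : ∀ k : ℕ, k ≤ n → c k < c (k + 1) := by
      intro k hk
      have hcard : ((k : Ordinal)).card ≤ Cardinal.mk S := by
        rw [Ordinal.card_nat, ← hκ]
        exact_mod_cast hk
      have hss := hstrict (k : Ordinal) hcard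
      obtain ⟨p, hp1, hp2⟩ := Set.exists_of_ssubset hss
      have hsub2 : ∀ a b : S, (sd (k + 1)).r a b → (sd k).r a b := by
        intro a b hab
        have : ((k : Ordinal)) ≤ ((k + 1 : ℕ) : Ordinal) := by exact_mod_cast Nat.le_succ k
        exact hmono this hab
      let f : Quotient (sd (k + 1)) → Quotient (sd k) :=
        Quotient.map id (fun a b hab => hsub2 a b hab)
      have hfsurj : Function.Surjective f := by
        intro q
        refine Quotient.inductionOn q fun a => ⟨Quotient.mk _ a, rfl⟩
      have hfninj : ¬Function.Injective f := by
        intro hinj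
        have hfeq : f (Quotient.mk (sd (k + 1)) p.1) = f (Quotient.mk (sd (k + 1)) p.2) := by
          show Quotient.mk (sd k) p.1 = Quotient.mk (sd k) p.2
          exact Quotient.sound (by exact hp1)
        have := Quotient.exact (hinj hfeq)
        have hmem : (p.1, p.2) ∈ M.Oiter R ((k : Ordinal) + 1) := by
          rw [← hcast k]; exact this
        exact hp2 hmem
      have hle := Nat.card_le_card_of_surjective f hfsurj
      rcases lt_or_eq_of_le hle with h | h
      · exact h
      · exact absurd ((Nat.bijective_iff_surjective_and_card f).2 ⟨hfsurj, h.symm⟩).injective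
          hfninj
    have hgrow : ∀ k : ℕ, k ≤ n + 1 → k ≤ c k := by
      intro k
      induction k with
      | zero => intro _; exact Nat.zero_le _
      | succ m ih =>
        intro hm
        have h1 := ih (Nat.le_of_succ_le hm)
        have h2 := hstep m (Nat.succ_le_succ_iff.1 hm)
        omega
    have hbound : c (n + 1) ≤ n :=
      Nat.card_le_card_of_surjective (Quotient.mk (sd (n + 1))) Quotient.mk_surjective
    have := hgrow (n + 1) le_rfl
    omega
  | inr hinf =>
    set κ := Cardinal.mk S with hκ
    set δ := (Order.succ κ).ord with hδ
    have hcardlt : ∀ i : δ.ToType, (tyiAux δ i).card ≤ κ := by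
      intro i
      have h1 : tyiAux δ i < (Order.succ κ).ord := tyiAux_lt_self δ i
      exact Order.lt_succ_iff.1 (Cardinal.lt_ord.1 h1)
    have hex : ∀ i : δ.ToType, ∃ p : S × S,
        p ∈ M.Oiter R (tyiAux δ i) ∧ p ∉ M.Oiter R (tyiAux δ i + 1) := by
      intro i
      obtain ⟨p, hp1, hp2⟩ := Set.exists_of_ssubset (hstrict _ (hcardlt i))
      exact ⟨p, hp1, hp2⟩
    choose g hg1 hg2 using hex
    have hginj : Function.Injective g := by
      intro a b hab
      by_contra hne
      rcases lt_trichotomy a b with h | h | h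
      · have hle : tyiAux δ a + 1 ≤ tyiAux δ b := by
          rw [Ordinal.add_one_eq_succ]
          exact Order.succ_le_iff.2 (tyiAux_lt_tyiAux δ h)
        have hb := hmono hle (hg1 b)
        rw [← hab] at hb
        exact hg2 a hb
      · exact hne h
      · have hle : tyiAux δ b + 1 ≤ tyiAux δ a := by
          rw [Ordinal.add_one_eq_succ]
          exact Order.succ_le_iff.2 (tyiAux_lt_tyiAux δ h)
        have ha := hmono hle (hg1 a)
        rw [hab] at ha
        exact hg2 b ha
    have hcards : Cardinal.mk δ.ToType ≤ Cardinal.mk (S × S) :=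
      Cardinal.mk_le_of_injective hginj
    rw [Cardinal.mk_toType] at hcards
    have hδcard : δ.card = Order.succ κ := by rw [hδ, Cardinal.card_ord]
    rw [hδcard] at hcards
    have hSS : Cardinal.mk (S × S) = κ := by
      rw [Cardinal.mk_prod]
      simp only [Cardinal.lift_id]
      exact Cardinal.mul_eq_self (Cardinal.infinite_iff.1 hinf)
    rw [hSS] at hcards
    exact absurd hcards (Order.lt_succ κ).not_ge

end LMP

end Stab


open LMP in
/-- If `R` is an equivalence relation with `∼s ⊆ R` and `𝒪(R) ⊆ R`, then iterating `𝒪` from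
`R` reaches state bisimilarity at some ordinal `α` with `|α| ≤ |S|`. -/
theorem exists_Oiter_eq_stateBisim
    {S L : Type u} [MeasurableSpace S] [Countable L]
    (M : LMP S L) (R : Set (S × S))
    (hequiv : Equivalence fun s t : S => (s, t) ∈ R)
    (hsub : M.stateBisim ⊆ R) (hpre : M.Oop R ⊆ R) :
    ∃ α : Ordinal.{u}, α.card ≤ Cardinal.mk S ∧ M.Oiter R α = M.stateBisim := by
  obtain ⟨α, hcard, hfix⟩ := M.exists_Oiter_fixed R hequiv hpre
  refine ⟨α, hcard, ?_⟩
  have hfix' : M.Oop (M.Oiter R α) = M.Oiter R α := by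
    rw [← Oiter_succ, ← hfix]
  apply subset_antisymm
  · intro p hp
    exact ⟨_, M.isStateBisim_of_fixed hfix', hp⟩
  · exact M.stateBisim_subset_Oiter R hsub α
end

section
/- For every separable LMP 𝕊, the Zhou ordinal Z(𝕊) exists and has cardinality at most 2^ℵ₀; equivalently, Z(𝕊) < (2^ℵ₀)⁺, the cardinal successor of the continuum. -/
open MeasureTheory

/-- A measurable space is separable if its σ-algebra is countably generated and
separates points. -/
def SeparableMeasurableSpace (S : Type*) [m : MeasurableSpace S] : Prop :=
  (∃ U : Set (Set S), U.Countable ∧ MeasurableSpace.generateFrom U = m) ∧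
    ∀ s t : S, s ≠ t → ∃ A : Set S, MeasurableSet A ∧ s ∈ A ∧ t ∉ A

namespace LMP

/-- `ζ` is the Zhou ordinal of `M`: the least ordinal `α` such that `𝒪^α(∼e) = ∼s`. -/
def IsZhou {S L : Type*} [MeasurableSpace S] (M : LMP S L) (ζ : Ordinal) : Prop :=
  M.Oiter M.eventBisim ζ = M.stateBisim ∧
    ∀ β < ζ, M.Oiter M.eventBisim β ≠ M.stateBisim

end LMP

section ZhouProof

open MeasureTheory LMP
open scoped NNReal ENNReal

namespace LMPAux

variable {S L : Type*} [MeasurableSpace S] (M : LMP S L)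

lemma tau_le_one (a : L) (s : S) (A : Set S) : M.τ a s A ≤ 1 :=
  le_trans (measure_mono (Set.subset_univ A)) (M.prob_le_one a s)

lemma tau_ne_top (a : L) (s : S) (A : Set S) : M.τ a s A ≠ ⊤ :=
  ne_top_of_le_ne_top ENNReal.one_ne_top (tau_le_one M a s A)

lemma measurableSet_sem (φ : LForm L) : MeasurableSet (M.sem φ) := by
  induction φ with
  | top => exact MeasurableSet.univ
  | and φ ψ ihφ ihψ => exact ihφ.inter ihψ
  | dia a q φ ih => exact (M.measurable_eval a _ ih) measurableSet_Ioi

/-- The logic σ-algebra, as a measurable-space structure. -/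
def mLogic (M : LMP S L) : MeasurableSpace S :=
  MeasurableSpace.generateFrom (Set.range M.sem)

lemma mLogic_le : mLogic M ≤ ‹MeasurableSpace S› :=
  MeasurableSpace.generateFrom_le (by rintro _ ⟨φ, rfl⟩; exact measurableSet_sem M φ)

lemma sigmaLogic_eq : M.sigmaLogic = {A | MeasurableSet[mLogic M] A} := rfl

/-- τ applied to a definable set is measurable w.r.t. the logic σ-algebra. -/
lemma measurable_tau_sem (a : L) (φ : LForm L) :
    Measurable[mLogic M] (fun s => M.τ a s (M.sem φ)) := by
  apply @measurable_of_Ioi _ _ _ _ _ (mLogic M) _ _ _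
  intro c
  have : (fun s => M.τ a s (M.sem φ)) ⁻¹' Set.Ioi c =
      ⋃ (q : {q : ℚ // 0 ≤ q ∧ q < 1}) (_ : c < ENNReal.ofReal (q : ℚ)),
        M.sem (LForm.dia a q φ) := by
    ext x
    simp only [Set.mem_preimage, Set.mem_Ioi, Set.mem_iUnion, LMP.sem, Set.mem_setOf_eq]
    constructor
    · intro hc
      obtain ⟨q, hq0, hcq, hqx⟩ := ENNReal.lt_iff_exists_rat_btwn.1 hc
      rw [show ((Real.toNNReal (q : ℝ) : ℝ≥0) : ℝ≥0∞) = ENNReal.ofReal (q : ℝ) from rfl]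
        at hcq hqx
      have hq1 : q < 1 := by
        have h1 : ENNReal.ofReal (q : ℝ) < 1 := lt_of_lt_of_le hqx (tau_le_one M a x _)
        rw [ENNReal.ofReal_lt_one] at h1
        exact_mod_cast h1
      exact ⟨⟨q, hq0, hq1⟩, hcq, hqx⟩
    · rintro ⟨q, hcq, hqx⟩
      exact lt_trans hcq hqx
  rw [this]
  exact MeasurableSet.iUnion fun q => MeasurableSet.iUnion fun _ =>
    MeasurableSpace.measurableSet_generateFrom ⟨LForm.dia a q φ, rfl⟩




lemma isPiSystem_range_sem : IsPiSystem (Set.range M.sem) := by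
  rintro _ ⟨φ, rfl⟩ _ ⟨ψ, rfl⟩ _
  exact ⟨LForm.and φ ψ, rfl⟩

/-- Dynkin: τ applied to any logic-measurable set is logic-measurable. -/
lemma measurable_tau (a : L) {A : Set S} (hA : MeasurableSet[mLogic M] A) :
    Measurable[mLogic M] (fun s => M.τ a s A) := by
  revert hA
  have key : ∀ ⦃A : Set S⦄, MeasurableSet[mLogic M] A →
      Measurable[mLogic M] (fun s => M.τ a s A) := by
    refine @MeasurableSpace.induction_on_inter S (mLogic M)
      (fun A _ => Measurable[mLogic M] (fun s => M.τ a s A)) (Set.range M.sem)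
      rfl (isPiSystem_range_sem M) ?_ ?_ ?_ ?_
    · simp only [measure_empty]; exact @measurable_const _ _ _ (mLogic M) _
    · rintro _ ⟨φ, rfl⟩; exact measurable_tau_sem M a φ
    · intro t ht ih
      have htm : MeasurableSet t := mLogic_le M t ht
      have : (fun s => M.τ a s tᶜ) = fun s => M.τ a s Set.univ - M.τ a s t := by
        funext s; exact measure_compl htm (tau_ne_top M a s t)
      rw [this]
      exact Measurable.sub (measurable_tau_sem M a LForm.top) ih
    · intro f hdisj hfm ihf
      have : (fun s => M.τ a s (⋃ n, f n)) = fun s => ∑' n, M.τ a s (f n) := by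
        funext s; exact measure_iUnion hdisj fun n => mLogic_le M _ (hfm n)
      rw [this]
      exact Measurable.ennreal_tsum ihf
  exact fun hA => key hA

lemma isSubSigmaAlgebra_sigmaLogic : IsSubSigmaAlgebra (M.sigmaLogic) := by
  constructor
  · exact fun A hA => mLogic_le M A hA
  · exact @MeasurableSet.empty _ (mLogic M)
  · exact fun A hA => @MeasurableSet.compl S A (mLogic M) hA
  · exact fun f hf => @MeasurableSet.iUnion S ℕ (mLogic M) _ f hf

lemma stable_sigmaLogic : M.Stable M.sigmaLogic := by
  intro A hA q _ _ a
  have : {s : S | ENNReal.ofReal (q : ℝ) < M.τ a s A} =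
      (fun s => M.τ a s A) ⁻¹' Set.Ioi (ENNReal.ofReal (q : ℝ)) := rfl
  rw [sigmaLogic_eq, Set.mem_setOf_eq, this]
  exact measurable_tau M a hA measurableSet_Ioi

/-- Every stable sub-σ-algebra contains all definable sets. -/
lemma sem_mem_of_stable {Λ : Set (Set S)} (hΛ : IsSubSigmaAlgebra Λ) (hs : M.Stable Λ)
    (φ : LForm L) : M.sem φ ∈ Λ := by
  induction φ with
  | top =>
    have : (Set.univ : Set S) = (∅ : Set S)ᶜ := by simp
    rw [LMP.sem, this]; exact hΛ.compl_mem ∅ hΛ.empty_mem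
  | and φ ψ ihφ ihψ =>
    have : M.sem (LForm.and φ ψ) = ((M.sem φ)ᶜ ∪ (M.sem ψ)ᶜ)ᶜ := by
      simp [LMP.sem, Set.compl_union]
    rw [this]
    have hu : (M.sem φ)ᶜ ∪ (M.sem ψ)ᶜ = ⋃ n : ℕ, (if n = 0 then (M.sem φ)ᶜ else (M.sem ψ)ᶜ) := by
      ext x; simp only [Set.mem_union, Set.mem_iUnion]
      constructor
      · rintro (h | h)
        · exact ⟨0, by simpa using h⟩
        · exact ⟨1, by simpa using h⟩
      · rintro ⟨n, h⟩; by_cases hn : n = 0 <;> simp [hn] at h <;> [left; right] <;> exact h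
    rw [hu]
    exact hΛ.compl_mem _ (hΛ.iUnion_mem _ fun n => by
      by_cases hn : n = 0 <;> simp only [hn, if_true, if_false, reduceIte] <;>
        [exact hΛ.compl_mem _ ihφ; exact hΛ.compl_mem _ ihψ])
  | dia a q φ ih =>
    exact hs (M.sem φ) ih q q.2.1 (le_of_lt q.2.2) a

/-- The measurable space associated to a sub-σ-algebra. -/
def mOf {Λ : Set (Set S)} (hΛ : IsSubSigmaAlgebra Λ) : MeasurableSpace S where
  MeasurableSet' := (· ∈ Λ)
  measurableSet_empty := hΛ.empty_mem
  measurableSet_compl := fun A hA => hΛ.compl_mem A hA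
  measurableSet_iUnion := fun f hf => hΛ.iUnion_mem f hf

lemma sigmaLogic_subset_of_stable {Λ : Set (Set S)} (hΛ : IsSubSigmaAlgebra Λ)
    (hs : M.Stable Λ) : M.sigmaLogic ⊆ Λ := by
  intro A hA
  have hle : mLogic M ≤ mOf hΛ :=
    MeasurableSpace.generateFrom_le (by rintro _ ⟨φ, rfl⟩; exact sem_mem_of_stable M hΛ hs φ)
  exact hle A hA

lemma eventBisim_eq : M.eventBisim = rel M.sigmaLogic := by
  ext p
  constructor
  · rintro ⟨Λ, hΛ, hs, hp⟩
    exact fun A hA => hp A (sigmaLogic_subset_of_stable M hΛ hs hA)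
  · intro hp
    exact ⟨M.sigmaLogic, isSubSigmaAlgebra_sigmaLogic M, stable_sigmaLogic M, hp⟩

lemma sem_mem_sigmaLogic (φ : LForm L) : M.sem φ ∈ M.sigmaLogic :=
  MeasurableSpace.measurableSet_generateFrom ⟨φ, rfl⟩

lemma sem_mem_sigmaCl_eventBisim (φ : LForm L) : M.sem φ ∈ sigmaCl M.eventBisim := by
  refine ⟨measurableSet_sem M φ, ?_⟩
  intro x hx s hxs
  rw [eventBisim_eq] at hxs
  exact (hxs (M.sem φ) (sem_mem_sigmaLogic M φ)).1 hx

/-- The σ-algebra of sets on which two fixed points agree. -/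
def mAgree (x y : S) : MeasurableSpace S where
  MeasurableSet' := fun A => (x ∈ A ↔ y ∈ A)
  measurableSet_empty := by simp
  measurableSet_compl := fun A hA => by simp [hA]
  measurableSet_iUnion := fun f hf => by simp only [Set.mem_iUnion]; exact exists_congr hf

lemma Oop_eventBisim_subset : M.Oop M.eventBisim ⊆ M.eventBisim := by
  intro p hp
  have hsem : ∀ φ : LForm L, p.1 ∈ M.sem φ ↔ p.2 ∈ M.sem φ := by
    intro φ
    induction φ with
    | top => simp [LMP.sem]
    | and φ ψ ihφ ihψ => simpa [LMP.sem] using and_congr ihφ ihψ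
    | dia a q φ ih =>
      have := hp a (M.sem φ) (sem_mem_sigmaCl_eventBisim M φ)
      simp only [LMP.sem, Set.mem_setOf_eq, this]
  rw [eventBisim_eq]
  intro A hA
  have hle : mLogic M ≤ mAgree p.1 p.2 :=
    MeasurableSpace.generateFrom_le (by rintro _ ⟨φ, rfl⟩; exact hsem φ)
  exact hle A hA
lemma stateBisim_symm {p : S × S} (hp : p ∈ M.stateBisim) : (p.2, p.1) ∈ M.stateBisim := by
  obtain ⟨R, hR, hpR⟩ := hp
  exact ⟨R, hR, hR.1 p hpR⟩

lemma sigmaCl_antitone {R R' : Set (S × S)} (h : R ⊆ R') : sigmaCl R' ⊆ sigmaCl R :=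
  fun A hA => ⟨hA.1, fun x hx s hxs => hA.2 hx (h hxs)⟩

lemma stateBisim_tau {p : S × S} (hp : p ∈ M.stateBisim) (a : L) {C : Set S}
    (hC : C ∈ sigmaCl M.stateBisim) : M.τ a p.1 C = M.τ a p.2 C := by
  obtain ⟨R, hR, hpR⟩ := hp
  have hsub : R ⊆ M.stateBisim := fun q hq => ⟨R, hR, hq⟩
  exact hR.2 p hpR a C (sigmaCl_antitone hsub hC)

lemma isSubSigmaAlgebra_sigmaCl_stateBisim : IsSubSigmaAlgebra (sigmaCl M.stateBisim) := by
  constructor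
  · exact fun A hA => hA.1
  · exact ⟨MeasurableSet.empty, fun x hx => absurd hx (Set.notMem_empty x)⟩
  · intro A hA
    refine ⟨hA.1.compl, ?_⟩
    intro x hx s hxs hs
    exact hx (hA.2 hs (stateBisim_symm M hxs))
  · intro f hf
    refine ⟨MeasurableSet.iUnion fun n => (hf n).1, ?_⟩
    intro x hx s hxs
    rw [Set.mem_iUnion] at hx ⊢
    obtain ⟨n, hn⟩ := hx
    exact ⟨n, (hf n).2 hn hxs⟩

lemma stable_sigmaCl_stateBisim : M.Stable (sigmaCl M.stateBisim) := by
  intro A hA q _ _ a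
  refine ⟨M.measurable_eval a A hA.1 measurableSet_Ioi, ?_⟩
  intro x hx s hxs
  have := stateBisim_tau M hxs a hA
  simp only [Set.mem_setOf_eq] at hx ⊢
  rwa [← this]

lemma stateBisim_subset_eventBisim : M.stateBisim ⊆ M.eventBisim := by
  intro p hp
  refine ⟨sigmaCl M.stateBisim, isSubSigmaAlgebra_sigmaCl_stateBisim M,
    stable_sigmaCl_stateBisim M, ?_⟩
  intro A hA
  exact ⟨fun h => hA.2 h hp, fun h => hA.2 h (stateBisim_symm M hp)⟩

lemma stateBisim_subset_Oop {R : Set (S × S)} (h : M.stateBisim ⊆ R) :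
    M.stateBisim ⊆ M.Oop R := by
  intro p hp a E hE
  exact stateBisim_tau M hp a (sigmaCl_antitone h hE)

lemma Oop_mono {R R' : Set (S × S)} (h : R ⊆ R') : M.Oop R ⊆ M.Oop R' :=
  fun p hp a E hE => hp a E (sigmaCl_antitone h hE)

lemma Oiter_zero (R : Set (S × S)) : M.Oiter R 0 = R :=
  Ordinal.limitRecOn_zero _ _ _

lemma Oiter_succ (R : Set (S × S)) (α : Ordinal) :
    M.Oiter R (Order.succ α) = M.Oop (M.Oiter R α) :=
  Ordinal.limitRecOn_succ _ _ _ _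

lemma Oiter_limit (R : Set (S × S)) {α : Ordinal} (h : Order.IsSuccLimit α) :
    M.Oiter R α = ⋂ (β : Ordinal) (_ : β < α), M.Oiter R β :=
  Ordinal.limitRecOn_limit _ _ _ _ h

lemma stateBisim_subset_Oiter (α : Ordinal) :
    M.stateBisim ⊆ M.Oiter M.eventBisim α := by
  induction α using Ordinal.induction with
  | h α ih =>
    rcases Ordinal.zero_or_succ_or_isSuccLimit α with h0 | ⟨β, rfl⟩ | hlim
    · rw [h0, Oiter_zero]; exact stateBisim_subset_eventBisim M
    · rw [Oiter_succ]
      exact stateBisim_subset_Oop M (ih β (Order.lt_succ β))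
    · rw [Oiter_limit M _ hlim]
      exact Set.subset_iInter fun β => Set.subset_iInter fun hβ => ih β hβ

lemma Oiter_succ_subset (α : Ordinal) :
    M.Oiter M.eventBisim (Order.succ α) ⊆ M.Oiter M.eventBisim α := by
  induction α using Ordinal.induction with
  | h α ih =>
    rcases Ordinal.zero_or_succ_or_isSuccLimit α with h0 | ⟨β, rfl⟩ | hlim
    · subst h0
      rw [Oiter_succ, Oiter_zero]
      exact Oop_eventBisim_subset M
    · calc M.Oiter M.eventBisim (Order.succ (Order.succ β))
          = M.Oop (M.Oiter M.eventBisim (Order.succ β)) := Oiter_succ M _ _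
        _ ⊆ M.Oop (M.Oiter M.eventBisim β) := Oop_mono M (ih β (Order.lt_succ β))
        _ = M.Oiter M.eventBisim (Order.succ β) := (Oiter_succ M _ β).symm
    · have key : ∀ β < α, M.Oiter M.eventBisim (Order.succ α) ⊆ M.Oiter M.eventBisim β := by
        intro β hβ
        have hsub : M.Oiter M.eventBisim α ⊆ M.Oiter M.eventBisim β := by
          rw [Oiter_limit M _ hlim]
          exact Set.iInter_subset_of_subset β (Set.iInter_subset _ hβ)
        calc M.Oiter M.eventBisim (Order.succ α)
            = M.Oop (M.Oiter M.eventBisim α) := Oiter_succ M _ _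
          _ ⊆ M.Oop (M.Oiter M.eventBisim β) := Oop_mono M hsub
          _ = M.Oiter M.eventBisim (Order.succ β) := (Oiter_succ M _ β).symm
          _ ⊆ M.Oiter M.eventBisim β := ih β hβ
      rw [Oiter_limit M _ hlim]
      exact Set.subset_iInter fun β => Set.subset_iInter fun hβ => key β hβ

lemma Oiter_antitone {α β : Ordinal} (h : α ≤ β) :
    M.Oiter M.eventBisim β ⊆ M.Oiter M.eventBisim α := by
  induction β using Ordinal.induction with
  | h β ih =>
    rcases eq_or_lt_of_le h with rfl | hlt
    · exact subset_rfl
    rcases Ordinal.zero_or_succ_or_isSuccLimit β with h0 | ⟨γ, rfl⟩ | hlim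
    · exact absurd (h0 ▸ hlt) (not_lt_zero (a := α))
    · have hαγ : α ≤ γ := Order.lt_succ_iff.1 hlt
      exact (Oiter_succ_subset M γ).trans (ih γ (Order.lt_succ γ) hαγ)
    · rw [Oiter_limit M _ hlim]
      exact Set.iInter_subset_of_subset α (Set.iInter_subset _ hlt)

lemma Oiter_fixpoint_eq_stateBisim {ζ : Ordinal}
    (hfix : M.Oiter M.eventBisim (Order.succ ζ) = M.Oiter M.eventBisim ζ) :
    M.Oiter M.eventBisim ζ = M.stateBisim := by
  set B := M.Oiter M.eventBisim ζ with hB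
  have hOB : M.Oop B = B := by rw [← Oiter_succ, hfix]
  have hbisim : M.IsStateBisim B := by
    constructor
    · intro p hp
      rw [← hOB] at hp ⊢
      exact fun a E hE => (hp a E hE).symm
    · intro p hp a C hC
      rw [← hOB] at hp
      exact hp a C hC
  apply Set.Subset.antisymm
  · exact fun p hp => ⟨B, hbisim, hp⟩
  · exact stateBisim_subset_Oiter M ζ
end LMPAux

section Card

open LMPAux LMP

universe v

lemma mk_le_continuum_of_separable {S : Type v} [MeasurableSpace S]
    (hsep : SeparableMeasurableSpace S) : Cardinal.mk S ≤ Cardinal.continuum := by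
  obtain ⟨⟨U, hUc, hUgen⟩, hpts⟩ := hsep
  set g : S → Set ↥U := fun s => {A | s ∈ (A : Set S)} with hg
  have hinj : Function.Injective g := by
    intro s t hst
    by_contra hne
    obtain ⟨A, hAm, hsA, htA⟩ := hpts s t hne
    have hle : (‹_› : MeasurableSpace S) ≤ mAgree s t := by
      rw [← hUgen]
      refine MeasurableSpace.generateFrom_le fun B hB => ?_
      exact Set.ext_iff.1 hst ⟨B, hB⟩
    exact htA ((hle A hAm).1 hsA)
  calc Cardinal.mk S ≤ Cardinal.mk (Set ↥U) := Cardinal.mk_le_of_injective hinj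
    _ = 2 ^ Cardinal.mk ↥U := Cardinal.mk_set
    _ ≤ 2 ^ Cardinal.aleph0 := by
        exact Cardinal.power_le_power_left (by norm_num) hUc.le_aleph0
    _ = Cardinal.continuum := Cardinal.two_power_aleph0

end Card
section Main

open LMPAux LMP Order

lemma exists_fixpoint {S L : Type u} [MeasurableSpace S] (M : LMP S L)
    (hsep : SeparableMeasurableSpace S) :
    ∃ ζ : Ordinal.{u}, ζ.card ≤ Cardinal.continuum ∧
      M.Oiter M.eventBisim (Order.succ ζ) = M.Oiter M.eventBisim ζ := by
  have hSS : Cardinal.mk (S × S) ≤ Cardinal.continuum := by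
    have h := mk_le_continuum_of_separable hsep
    calc Cardinal.mk (S × S) = Cardinal.mk S * Cardinal.mk S := by
          simp [Cardinal.mk_prod]
      _ ≤ Cardinal.continuum * Cardinal.continuum := mul_le_mul' h h
      _ = Cardinal.continuum := Cardinal.mul_eq_self Cardinal.aleph0_le_continuum
  set o : Ordinal.{u} := (Order.succ Cardinal.continuum.{u}).ord with ho
  by_contra hcon
  push_neg at hcon
  have hstrict : ∀ ζ : Set.Iio o, ∃ p : S × S,
      p ∈ M.Oiter M.eventBisim ζ ∧ p ∉ M.Oiter M.eventBisim (Order.succ ζ) := by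
    rintro ⟨ζ, hζ⟩
    have hcard : ζ.card ≤ Cardinal.continuum := by
      have := Cardinal.lt_ord.1 hζ
      exact Order.lt_succ_iff.1 this
    have hne := hcon ζ hcard
    have hsub := Oiter_succ_subset M ζ
    obtain ⟨p, hp1, hp2⟩ := Set.exists_of_ssubset (hsub.ssubset_of_ne hne)
    exact ⟨p, hp1, hp2⟩
  choose F hF1 hF2 using hstrict
  have hinj : Function.Injective F := by
    intro a b hab
    by_contra hne
    have hne' : (a : Ordinal) ≠ (b : Ordinal) := fun h => hne (Subtype.ext h)
    rcases hne'.lt_or_gt with hlt | hlt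
    · have : F b ∈ M.Oiter M.eventBisim (Order.succ a) :=
        Oiter_antitone M (Order.succ_le_of_lt hlt) (hF1 b)
      rw [← hab] at this
      exact hF2 a this
    · have : F a ∈ M.Oiter M.eventBisim (Order.succ b) :=
        Oiter_antitone M (Order.succ_le_of_lt hlt) (hF1 a)
      rw [hab] at this
      exact hF2 b this
  have hle : Cardinal.lift.{u} (Cardinal.mk (Set.Iio o)) ≤
      Cardinal.lift.{u+1} (Cardinal.mk (S × S)) :=
    Cardinal.lift_mk_le'.mpr ⟨⟨F, hinj⟩⟩
  rw [Ordinal.mk_Iio_ordinal, Cardinal.lift_lift, Cardinal.card_ord] at hle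
  have hle2 : Cardinal.lift.{u+1} (Order.succ Cardinal.continuum.{u}) ≤
      Cardinal.lift.{u+1} Cardinal.continuum.{u} :=
    hle.trans (Cardinal.lift_le.2 hSS)
  rw [Cardinal.lift_le] at hle2
  exact (Order.lt_succ Cardinal.continuum.{u}).not_ge hle2

end Main
end ZhouProof
/-- For every separable LMP `𝕊`, the Zhou ordinal `Z(𝕊)` exists and has cardinality at most
`2^ℵ₀`; equivalently `Z(𝕊) < (2^ℵ₀)⁺`. -/
theorem exists_zhou_ordinal_card_le_continuum
    {S L : Type u} [MeasurableSpace S] [Countable L] (M : LMP S L)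
    (hsep : SeparableMeasurableSpace S) :
    ∃ ζ : Ordinal.{u}, M.IsZhou ζ ∧ ζ.card ≤ Cardinal.continuum := by
  obtain ⟨ζ, hζcard, hζfix⟩ := exists_fixpoint M hsep
  have hζeq : M.Oiter M.eventBisim ζ = M.stateBisim :=
    LMPAux.Oiter_fixpoint_eq_stateBisim M hζfix
  set T : Set Ordinal.{u} := {β | M.Oiter M.eventBisim β = M.stateBisim} with hT
  have hne : T.Nonempty := ⟨ζ, hζeq⟩
  refine ⟨sInf T, ⟨csInf_mem hne, ?_⟩, ?_⟩
  · intro β hβ hcontra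
    exact (csInf_le (OrderBot.bddBelow T) hcontra).not_gt hβ
  · exact le_trans (Ordinal.card_le_card (csInf_le (OrderBot.bddBelow T) hζeq)) hζcard
end
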